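/- arXiv:1508.00956 — 4 statements merged into one kernel-verified Lean document; each statement's English description precedes it below -/
import Mathlib

section
/- For distinct letters i ≠ j in {1,2,3}, any t ≥ 1, and any words σ, τ with |σ|, |τ| ≤ t−1, one has L(σ) + L(τ) ≤ d_t(iσ, jτ) ≤ L(σ) + L(τ) + 3. -/
open Filter Finset

/-- A letter of the alphabet `{1,2,3}`. -/
abbrev Letter := Fin 3

/-- A word: a finite (possibly empty) sequence of letters. -/
abbrev Word := List Letter

/-- Adjacency of two words: `σ ≠ τ`, and writing `σ = β ++ σ'`, `τ = β ++ τ'` with `β`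
the longest common prefix, either one of `σ'`, `τ'` is empty and the other uses at most two
distinct letters, or `σ' = i j^k` and `τ' = j i^{k'}` for distinct letters `i ≠ j`. -/
def WordAdj (σ τ : Word) : Prop :=
  σ ≠ τ ∧ ∃ β σ' τ' : Word,
    σ = β ++ σ' ∧ τ = β ++ τ' ∧
    ((σ' = [] ∧ τ'.toFinset.card ≤ 2) ∨
     (τ' = [] ∧ σ'.toFinset.card ≤ 2) ∨
     (∃ (i j : Letter) (k k' : ℕ), i ≠ j ∧
        σ' = i :: List.replicate k j ∧ τ' = j :: List.replicate k' i))

/-- The graph `G_t`: vertices are the words of length at most `t` (all other words are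
isolated), with adjacency `WordAdj`. -/
def Gt (t : ℕ) : SimpleGraph Word where
  Adj σ τ := σ.length ≤ t ∧ τ.length ≤ t ∧ WordAdj σ τ
  symm := by
    constructor
    rintro σ τ ⟨h1, h2, hne, β, σ', τ', e1, e2, h3⟩
    refine ⟨h2, h1, hne.symm, β, τ', σ', e2, e1, ?_⟩
    rcases h3 with h | h | ⟨i, j, k, k', hij, hs, ht⟩
    · exact Or.inr (Or.inl h)
    · exact Or.inl h
    · exact Or.inr (Or.inr ⟨j, i, k', k, hij.symm, ht, hs⟩)
  loopless := ⟨fun σ h => h.2.2.1 rfl⟩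

lemma gt_adj_mk {t : ℕ} {σ τ : Word} (h1 : σ.length ≤ t) (h2 : τ.length ≤ t)
    (h3 : WordAdj σ τ) : (Gt t).Adj σ τ :=
  show σ.length ≤ t ∧ τ.length ≤ t ∧ WordAdj σ τ from ⟨h1, h2, h3⟩

lemma gt_adj_dest {t : ℕ} {σ τ : Word} (h : (Gt t).Adj σ τ) :
    σ.length ≤ t ∧ τ.length ≤ t ∧ WordAdj σ τ := h

/-- `dW t σ τ` is the geodesic distance `d_t(σ,τ)` in the graph `G_t`. -/
noncomputable def dW (t : ℕ) (σ τ : Word) : ℕ := (Gt t).dist σ τ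

/-- Length of the longest suffix of `σ` using at most two distinct letters. -/
def suffLen (σ : Word) : ℕ :=
  Nat.findGreatest (fun m => (σ.drop (σ.length - m)).toFinset.card ≤ 2) σ.length

/-- `fW σ = τ₂` where `σ = τ₂τ₁` and `τ₁` is the longest suffix of `σ` using at most two
distinct letters; `fW [] = []`. -/
def fW (σ : Word) : Word := σ.take (σ.length - suffLen σ)

/-- `ω(σ)`: the least `n ≥ 0` with `f^[n] σ = ∅`. -/
noncomputable def omegaW (σ : Word) : ℕ := sInf {n : ℕ | fW^[n] σ = []}

/-- `L(σ) = d_{|σ|}(σ, ∅) - 1` for nonempty `σ`, and `L(∅) = 0`. -/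
noncomputable def Lw (σ : Word) : ℕ := if σ = [] then 0 else dW σ.length σ [] - 1

/-- `ᾱ_m`: the average of `L` over the `3^m` words of length `m`. -/
noncomputable def alphaBar (m : ℕ) : ℝ :=
  (∑ v : Fin m → Letter, (Lw (List.ofFn v) : ℝ)) / 3 ^ m

/-- `α* = sup_{m ≥ 1} ᾱ_m / m`. -/
noncomputable def alphaStar : ℝ :=
  sSup {x : ℝ | ∃ m : ℕ, 1 ≤ m ∧ x = alphaBar m / m}

/-- `#V_t = (3^{t+1} - 1)/2`, the number of vertices of `G_t`, as a real number. -/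
noncomputable def Nv (t : ℕ) : ℝ := ((3 : ℝ) ^ (t + 1) - 1) / 2

/-- The sum of `d_t(σ,τ)` over all ordered pairs of words `σ, τ ∈ V_t`
(twice the sum over unordered pairs of distinct words). -/
noncomputable def pairSum (t : ℕ) : ℝ :=
  ∑ k ∈ range (t + 1), ∑ l ∈ range (t + 1),
    ∑ v : Fin k → Letter, ∑ w : Fin l → Letter,
      (dW t (List.ofFn v) (List.ofFn w) : ℝ)

/-- The average path length `D̄(t)` of `G_t`. -/
noncomputable def Dbar (t : ℕ) : ℝ := pairSum t / (Nv t * (Nv t - 1))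

/-- `κ_t = (Σ_{σ ∈ V_t} L(σ)) / #V_t`. -/
noncomputable def kappa (t : ℕ) : ℝ :=
  (∑ k ∈ range (t + 1), ∑ v : Fin k → Letter, (Lw (List.ofFn v) : ℝ)) / Nv t

/-- `π_t`: the sum of `d_t(σ,τ)` over unordered pairs of distinct `σ, τ ∈ V_t`. -/
noncomputable def piT (t : ℕ) : ℝ := pairSum t / 2

/-- `μ_t`: the sum of `d_t(σ,τ)` over unordered pairs of distinct `σ, τ ∈ V_t`
having the same first letter. -/
noncomputable def muT (t : ℕ) : ℝ :=
  (∑ i : Letter, ∑ k ∈ range t, ∑ l ∈ range t,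
    ∑ v : Fin k → Letter, ∑ w : Fin l → Letter,
      (dW t (i :: List.ofFn v) (i :: List.ofFn w) : ℝ)) / 2

/-- `λ_t = Σ_{σ ∈ V_t, σ ≠ ∅} d_t(σ, ∅)`. -/
noncomputable def lambdaT (t : ℕ) : ℝ :=
  ∑ k ∈ Finset.Icc 1 t, ∑ v : Fin k → Letter, (dW t (List.ofFn v) [] : ℝ)

/-- `ν_t = Σ_{i<j} Σ_{|σ'|,|τ'| ≤ t-1} d_t(iσ', jτ')`. -/
noncomputable def nuT (t : ℕ) : ℝ :=
  ∑ i : Letter, ∑ j : Letter,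
    if i < j then
      ∑ k ∈ range t, ∑ l ∈ range t,
        ∑ v : Fin k → Letter, ∑ w : Fin l → Letter,
          (dW t (i :: List.ofFn v) (j :: List.ofFn w) : ℝ)
    else 0

/-- `IsNormalDecomp σ τs`: `τs = [τ₁, …, τ_l]` (with `l ≥ 1`) is a normal decomposition
of `σ`: `σ = τ₁⋯τ_l`; `#τ₁ ≤ 2`, `|τ₁| ≥ 1`; `#τ_i = 2`, `|τ_i| ≥ 2` for `i ≥ 2`; and for
`i < l` the last letter of `τ_i` is the unique letter of the alphabet not appearing
in `τ_{i+1}`. -/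
def IsNormalDecomp (σ : Word) (τs : List Word) : Prop :=
  σ = τs.flatten ∧ τs ≠ [] ∧
  (∀ i : Fin τs.length,
    (i.1 = 0 → 1 ≤ (τs.get i).length ∧ (τs.get i).toFinset.card ≤ 2) ∧
    (1 ≤ i.1 → 2 ≤ (τs.get i).length ∧ (τs.get i).toFinset.card = 2)) ∧
  (∀ i : ℕ, ∀ h : i + 1 < τs.length,
    ∃ c : Letter, (τs.get ⟨i, Nat.lt_of_succ_lt h⟩).getLast? = some c ∧
      c ∉ (τs.get ⟨i + 1, h⟩).toFinset ∧
      ∀ c' : Letter, c' ∉ (τs.get ⟨i + 1, h⟩).toFinset → c' = c)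

/-- `W_{k₁⋯k_l}`: the number of words of length `k₁ + ⋯ + k_l` admitting a normal
decomposition into blocks of lengths `k₁, …, k_l`. -/
noncomputable def Wcount (ks : List ℕ) : ℕ :=
  Nat.card {σ : Word // ∃ τs : List Word, IsNormalDecomp σ τs ∧ τs.map List.length = ks}

/-- `Ē(t) = 3^{-t} Σ_{q ≥ 1} Σ_{k₁ ≥ 1, k₂,…,k_q ≥ 2, k₁+⋯+k_q = t} (q-1)·W_{k₁⋯k_q}`. -/
noncomputable def Ebar (t : ℕ) : ℝ :=
  ((∑ c : Composition t,
      if ∀ i ∈ c.blocks.tail, 2 ≤ i then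
        (c.blocks.length - 1) * Wcount c.blocks
      else 0 : ℕ) : ℝ) / 3 ^ t
section Aux

open SimpleGraph

/-- triangle inequality when the first pair is reachable -/
lemma dist_tri {V : Type*} {G : SimpleGraph V} {u v w : V} (h : G.Reachable u v) :
    G.dist u w ≤ G.dist u v + G.dist v w := by
  by_cases h2 : G.Reachable v w
  · obtain ⟨p, hp⟩ := h.exists_walk_length_eq_dist
    obtain ⟨q, hq⟩ := h2.exists_walk_length_eq_dist
    rw [← hp, ← hq, ← Walk.length_append]
    exact SimpleGraph.dist_le _
  · have huw : ¬ G.Reachable u w := fun huw => h2 (h.symm.trans huw)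
    simp [SimpleGraph.dist_eq_zero_of_not_reachable huw]

lemma card_toFinset_take_le (l : Word) (n : ℕ) :
    (l.take n).toFinset.card ≤ l.toFinset.card :=
  Finset.card_le_card (fun c hc => by
    simp only [List.mem_toFinset] at *
    exact List.mem_of_mem_take hc)

lemma card_toFinset_tail_le (l : Word) :
    l.tail.toFinset.card ≤ l.toFinset.card :=
  Finset.card_le_card (fun c hc => by
    simp only [List.mem_toFinset] at *
    exact List.mem_of_mem_tail hc)

lemma card_toFinset_replicate_le (k : ℕ) (b : Letter) :
    (List.replicate k b).toFinset.card ≤ 1 := by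
  have : (List.replicate k b).toFinset ⊆ {b} := by
    intro c hc
    simp only [List.mem_toFinset, List.mem_replicate] at hc
    simp [hc.2]
  simpa using Finset.card_le_card this

lemma wordAdj_nil_right {a : Word} (hne : a ≠ []) (hcard : a.toFinset.card ≤ 2) :
    WordAdj a [] :=
  ⟨hne, [], a, [], by simp, by simp, Or.inr (Or.inl ⟨rfl, hcard⟩)⟩

lemma adj_nil_right {m : ℕ} {a : Word} (hne : a ≠ []) (hlen : a.length ≤ m)
    (hcard : a.toFinset.card ≤ 2) : (Gt m).Adj a [] :=
  gt_adj_mk hlen (by simp) (wordAdj_nil_right hne hcard)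

/-- every word is reachable from the empty word -/
lemma reach_nil (m : ℕ) : ∀ (a : Word), a.length ≤ m → (Gt m).Reachable a [] := by
  intro a
  induction a using List.reverseRecOn with
  | nil => intro _; exact Reachable.refl _
  | append_singleton l c ih =>
    intro hl
    have hl' : l.length ≤ m := by simp at hl; omega
    have hadj : (Gt m).Adj (l ++ [c]) l := by
      refine gt_adj_mk (by simpa using hl) hl' ?_
      refine ⟨by simp, l, [c], [], rfl, by simp, Or.inr (Or.inl ⟨rfl, ?_⟩)⟩
      simp
    exact hadj.reachable.trans (ih hl')

end Aux
section Aux2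
open SimpleGraph

/-- the case disjunction in WordAdj -/
def AdjCases (σ' τ' : Word) : Prop :=
  (σ' = [] ∧ τ'.toFinset.card ≤ 2) ∨
  (τ' = [] ∧ σ'.toFinset.card ≤ 2) ∨
  (∃ (i j : Letter) (k k' : ℕ), i ≠ j ∧
     σ' = i :: List.replicate k j ∧ τ' = j :: List.replicate k' i)

lemma take_core (m : ℕ) (β σ' τ' : Word) (hc : AdjCases σ' τ') :
    (β ++ σ').take m = (β ++ τ').take m ∨
      WordAdj ((β ++ σ').take m) ((β ++ τ').take m) := by
  rw [List.take_append, List.take_append]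
  by_cases hm : m ≤ β.length
  · left
    have : m - β.length = 0 := by omega
    simp [this]
  · push_neg at hm
    have hβ : β.take m = β := List.take_of_length_le (le_of_lt hm)
    rw [hβ]
    set r := m - β.length with hr
    have hr1 : 1 ≤ r := by omega
    rcases hc with ⟨h1, h2⟩ | ⟨h1, h2⟩ | ⟨a, b, k, k', hab, h1, h2⟩
    · subst h1
      by_cases hτ : τ'.take r = []
      · left; simp [hτ]
      · right
        refine ⟨?_, β, [], τ'.take r, by simp, rfl, Or.inl ⟨rfl, ?_⟩⟩
        · intro h
          exact hτ (by simpa using h.symm)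
        · exact le_trans (card_toFinset_take_le τ' r) h2
    · subst h1
      by_cases hσ : σ'.take r = []
      · left; simp [hσ]
      · right
        refine ⟨?_, β, σ'.take r, [], rfl, by simp, Or.inr (Or.inl ⟨rfl, ?_⟩)⟩
        · intro h
          exact hσ (by simpa using h)
        · exact le_trans (card_toFinset_take_le σ' r) h2
    · subst h1; subst h2
      right
      obtain ⟨r', hr'⟩ : ∃ r', r = r' + 1 := ⟨r - 1, by omega⟩
      rw [hr']
      have e1 : (a :: List.replicate k b).take (r' + 1)
          = a :: List.replicate (min r' k) b := by
        simp [List.take_succ_cons, List.take_replicate]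
      have e2 : (b :: List.replicate k' a).take (r' + 1)
          = b :: List.replicate (min r' k') a := by
        simp [List.take_succ_cons, List.take_replicate]
      rw [e1, e2]
      refine ⟨?_, β, _, _, rfl, rfl,
        Or.inr (Or.inr ⟨a, b, min r' k, min r' k', hab, rfl, rfl⟩)⟩
      intro h
      have := List.append_cancel_left h
      exact hab (by injection this)

/-- tails of two adjacent words with the same head are adjacent -/
lemma wordAdj_tail {c : Letter} {xs ws : Word} (h : WordAdj (c :: xs) (c :: ws)) :
    WordAdj xs ws := by
  obtain ⟨hne, β, σ', τ', hx, hw, hc⟩ := h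
  cases β with
  | nil =>
    exfalso
    simp only [List.nil_append] at hx hw
    rcases hc with ⟨h1, _⟩ | ⟨h1, _⟩ | ⟨a, b, k, k', hab, h1, h2⟩
    · rw [h1] at hx; simp at hx
    · rw [h1] at hw; simp at hw
    · rw [h1] at hx; rw [h2] at hw
      have ha : a = c := by injection hx.symm
      have hb : b = c := by injection hw.symm
      exact hab (ha.trans hb.symm)
  | cons d β' =>
    simp only [List.cons_append] at hx hw
    have hxs : xs = β' ++ σ' := by injection hx
    have hws : ws = β' ++ τ' := by injection hw
    refine ⟨fun h => hne (by rw [h]), β', σ', τ', hxs, hws, hc⟩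

/-- prepending a letter preserves adjacency -/
lemma wordAdj_cons {c : Letter} {a b : Word} (h : WordAdj a b) :
    WordAdj (c :: a) (c :: b) := by
  obtain ⟨hne, β, σ', τ', ha, hb, hc⟩ := h
  exact ⟨fun h => hne (by injection h), c :: β, σ', τ', by rw [ha]; rfl,
    by rw [hb]; rfl, hc⟩

end Aux2
section Aux3
open SimpleGraph

/-- the projection: tail truncated to length `m` for words starting with `i`, else `[]` -/
def qi (i : Letter) (m : ℕ) (π : Word) : Word :=
  if π.head? = some i then π.tail.take m else []

lemma qi_cons (i : Letter) (m : ℕ) (xs : Word) : qi i m (i :: xs) = xs.take m := by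
  simp [qi]

lemma qi_len (i : Letter) (m : ℕ) (π : Word) : (qi i m π).length ≤ m := by
  unfold qi; split
  · exact le_trans (List.length_take_le _ _) le_rfl
  · simp

/-- crossing edge: the tail of the `i`-side word uses at most 2 letters -/
lemma crossing {i : Letter} {x w : Word} (h : WordAdj x w)
    (hx : x.head? = some i) (hw : w.head? ≠ some i) :
    x.tail.toFinset.card ≤ 2 := by
  obtain ⟨hne, β, σ', τ', hxe, hwe, hc⟩ := h
  cases β with
  | cons d β' =>
    exfalso
    subst hxe; subst hwe
    simp only [List.cons_append, List.head?_cons] at hx hw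
    exact hw hx
  | nil =>
    simp only [List.nil_append] at hxe hwe
    subst hxe; subst hwe
    rcases hc with ⟨h1, h2⟩ | ⟨h1, h2⟩ | ⟨a, b, k, k', hab, h1, h2⟩
    · subst h1; simp at hx
    · subst h1
      exact le_trans (card_toFinset_tail_le _) h2
    · subst h1
      simp only [List.tail_cons]
      exact le_trans (card_toFinset_replicate_le _ _) (by norm_num)

/-- the projection maps edges of `G_t` to edges or loops of `G_m` -/
lemma q_step (i : Letter) (m t : ℕ) {x w : Word} (h : (Gt t).Adj x w) :
    qi i m x = qi i m w ∨ (Gt m).Adj (qi i m x) (qi i m w) := by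
  obtain ⟨hxl, hwl, hadj⟩ := gt_adj_dest h
  by_cases hx : x.head? = some i <;> by_cases hw : w.head? = some i
  · -- both start with i
    obtain ⟨xs, rfl⟩ : ∃ xs, x = i :: xs := by
      cases x with
      | nil => simp at hx
      | cons c l => exact ⟨l, by injection hx with h'; rw [h']⟩
    obtain ⟨ws, rfl⟩ : ∃ ws, w = i :: ws := by
      cases w with
      | nil => simp at hw
      | cons c l => exact ⟨l, by injection hw with h'; rw [h']⟩
    rw [qi_cons, qi_cons]
    have htail : WordAdj xs ws := wordAdj_tail hadj
    obtain ⟨hne, β, σ', τ', hxs, hws, hc⟩ := htail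
    subst hxs; subst hws
    rcases take_core m β σ' τ' hc with heq | hAdj
    · exact Or.inl heq
    · right
      exact gt_adj_mk (le_trans (List.length_take_le _ _) le_rfl)
             (le_trans (List.length_take_le _ _) le_rfl) hAdj
  · -- x starts with i, w does not: crossing
    have hcard : x.tail.toFinset.card ≤ 2 := crossing hadj hx hw
    have hqw : qi i m w = [] := by simp [qi, hw]
    rw [hqw]
    by_cases hq : qi i m x = []
    · exact Or.inl (by rw [hq])
    · right
      refine adj_nil_right hq (qi_len _ _ _) ?_
      have : qi i m x = x.tail.take m := by simp [qi, hx]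
      rw [this]
      exact le_trans (card_toFinset_take_le _ _) hcard
  · -- symmetric crossing
    have hA : (Gt t).Adj x w := gt_adj_mk hxl hwl hadj
    have hcard : w.tail.toFinset.card ≤ 2 := crossing (gt_adj_dest hA.symm).2.2 hw hx
    have hqx : qi i m x = [] := by simp [qi, hx]
    rw [hqx]
    by_cases hq : qi i m w = []
    · exact Or.inl (by rw [hq])
    · right
      refine ((Gt m).adj_symm) (adj_nil_right hq (qi_len _ _ _) ?_)
      have : qi i m w = w.tail.take m := by simp [qi, hw]
      rw [this]
      exact le_trans (card_toFinset_take_le _ _) hcard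
  · left; simp [qi, hx, hw]

/-- symmetry of WordAdj used above -/
lemma walk_bound (i : Letter) (m t : ℕ) {x y : Word} (p : (Gt t).Walk x y) :
    (Gt m).Reachable (qi i m x) (qi i m y) ∧
      (Gt m).dist (qi i m x) (qi i m y) ≤ p.length := by
  induction p with
  | nil => exact ⟨Reachable.refl _, by simp⟩
  | @cons u v y h p ih =>
    rcases q_step i m t h with heq | hadj
    · rw [Walk.length_cons, heq]
      exact ⟨ih.1, le_trans ih.2 (Nat.le_succ _)⟩
    · refine ⟨hadj.reachable.trans ih.1, ?_⟩
      rw [Walk.length_cons]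
      have htri := dist_tri (w := qi i m y) hadj.reachable
      have h1 : (Gt m).dist (qi i m u) (qi i m v) = 1 :=
        SimpleGraph.dist_eq_one_iff_adj.mpr hadj
      have h2 := ih.2
      omega

end Aux3
section Aux4
open SimpleGraph

/-- first-exit lemma -/
lemma exit_lemma (i : Letter) (m t : ℕ) : ∀ {x y : Word} (p : (Gt t).Walk x y),
    x.head? = some i → y.head? ≠ some i →
    ∃ n₁ < p.length, (∀ k ≤ n₁, (p.getVert k).head? = some i) ∧
      (Gt m).Reachable (qi i m x) (qi i m (p.getVert n₁)) ∧
      (Gt m).dist (qi i m x) (qi i m (p.getVert n₁)) ≤ n₁ ∧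
      ((p.getVert n₁).tail).toFinset.card ≤ 2 := by
  intro x y p
  induction p with
  | nil => intro hx hy; exact absurd hx hy
  | @cons u v y h p ih =>
    intro hx hy
    by_cases hv : v.head? = some i
    · obtain ⟨n₁, hlt, hall, hreach, hdist, hcard⟩ := ih hv hy
      refine ⟨n₁ + 1, by simp [Walk.length_cons]; omega, ?_, ?_, ?_, ?_⟩
      · intro k hk
        cases k with
        | zero => simpa [Walk.getVert_zero] using hx
        | succ k' =>
          rw [Walk.getVert_cons_succ]
          exact hall k' (by omega)
      · rw [Walk.getVert_cons_succ]
        rcases q_step i m t h with heq | hadj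
        · rw [heq]; exact hreach
        · exact hadj.reachable.trans hreach
      · rw [Walk.getVert_cons_succ]
        rcases q_step i m t h with heq | hadj
        · rw [heq]; omega
        · have htri := dist_tri (w := qi i m (p.getVert n₁)) hadj.reachable
          have h1 : (Gt m).dist (qi i m u) (qi i m v) = 1 :=
            SimpleGraph.dist_eq_one_iff_adj.mpr hadj
          omega
      · rw [Walk.getVert_cons_succ]; exact hcard
    · refine ⟨0, by simp [Walk.length_cons], ?_, ?_, ?_, ?_⟩
      · intro k hk
        interval_cases k
        simpa [Walk.getVert_zero] using hx
      · rw [Walk.getVert_zero]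
      · rw [Walk.getVert_zero]; simp
      · rw [Walk.getVert_zero]
        exact crossing (gt_adj_dest h).2.2 hx hv

end Aux4
section Aux5
open SimpleGraph

lemma cons_walk (c : Letter) {m t : ℕ} (hmt : m + 1 ≤ t) :
    ∀ {a b : Word} (p : (Gt m).Walk a b),
      ∃ q : (Gt t).Walk (c :: a) (c :: b), q.length = p.length := by
  intro a b p
  induction p with
  | nil => exact ⟨Walk.nil, rfl⟩
  | @cons u v y h p ih =>
    obtain ⟨q, hq⟩ := ih
    have hadj : (Gt t).Adj (c :: u) (c :: v) := by
      refine gt_adj_mk ?_ ?_ (wordAdj_cons (gt_adj_dest h).2.2)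
      · have := (gt_adj_dest h).1; simp; omega
      · have := (gt_adj_dest h).2.1; simp; omega
    exact ⟨Walk.cons hadj q, by simp [hq]⟩

lemma cons_reach_dist (c : Letter) {m t : ℕ} (hmt : m + 1 ≤ t) {a b : Word}
    (hr : (Gt m).Reachable a b) :
    (Gt t).Reachable (c :: a) (c :: b) ∧ (Gt t).dist (c :: a) (c :: b) ≤ (Gt m).dist a b := by
  obtain ⟨p, hp⟩ := hr.exists_walk_length_eq_dist
  obtain ⟨q, hq⟩ := cons_walk c hmt p
  exact ⟨⟨q⟩, by rw [← hp, ← hq]; exact SimpleGraph.dist_le q⟩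

lemma dist_nil_le_Lw (σ : Word) : (Gt σ.length).dist σ [] ≤ Lw σ + 1 := by
  by_cases h : σ = []
  · subst h; simp [Lw, SimpleGraph.dist_self]
  · have hr : (Gt σ.length).Reachable σ [] := reach_nil _ σ le_rfl
    have hpos : 0 < (Gt σ.length).dist σ [] := hr.pos_dist_of_ne h
    simp only [Lw, if_neg h, dW]
    omega

lemma Lw_le_of_dist (σ : Word) (n : ℕ) (h : (Gt σ.length).dist σ [] ≤ n + 1) :
    Lw σ ≤ n := by
  by_cases hσ : σ = []
  · subst hσ; simp [Lw]
  · simp only [Lw, if_neg hσ, dW]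
    omega

end Aux5

open SimpleGraph in
/-- For distinct letters `i ≠ j`, `t ≥ 1`, and words `σ, τ` of length at most `t-1`,
`L(σ) + L(τ) ≤ d_t(iσ, jτ) ≤ L(σ) + L(τ) + 3`. -/
theorem dist_cross_bounds (t : ℕ) (ht : 1 ≤ t) (i j : Letter) (hij : i ≠ j)
    (σ τ : Word) (hσ : σ.length ≤ t - 1) (hτ : τ.length ≤ t - 1) :
    Lw σ + Lw τ ≤ dW t (i :: σ) (j :: τ) ∧
    dW t (i :: σ) (j :: τ) ≤ Lw σ + Lw τ + 3 := by
  have hσt : σ.length + 1 ≤ t := by omega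
  have hτt : τ.length + 1 ≤ t := by omega
  have reachσ : (Gt σ.length).Reachable σ [] := reach_nil _ σ le_rfl
  have reachτ : (Gt τ.length).Reachable τ [] := reach_nil _ τ le_rfl
  obtain ⟨R1, D1⟩ := cons_reach_dist i hσt reachσ
  obtain ⟨R2, D2⟩ := cons_reach_dist j hτt reachτ
  have Adjij : (Gt t).Adj [i] [j] := by
    refine gt_adj_mk (by simpa using ht) (by simpa using ht) ⟨?_, [], [i], [j], rfl, rfl,
      Or.inr (Or.inr ⟨i, j, 0, 0, hij, by simp, by simp⟩)⟩
    intro h; exact hij (by injection h)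
  have Rfull : (Gt t).Reachable (i :: σ) (j :: τ) :=
    R1.trans (Adjij.reachable.trans R2.symm)
  constructor
  · -- lower bound
    obtain ⟨p, hp⟩ := Rfull.exists_walk_length_eq_dist
    have hx : (i :: σ).head? = some i := rfl
    have hy : (j :: τ).head? ≠ some i := by
      simp only [List.head?_cons]
      intro h; injection h with h'; exact hij h'.symm
    obtain ⟨n₁, hn₁, hall₁, reachA, distA, cardA⟩ := exit_lemma i σ.length t p hx hy
    have hx' : (j :: τ).head? = some j := rfl
    have hy' : (i :: σ).head? ≠ some j := by
      simp only [List.head?_cons]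
      intro h; injection h with h'; exact hij h'
    obtain ⟨n₂, hn₂, hall₂, reachB, distB, cardB⟩ :=
      exit_lemma j τ.length t p.reverse hx' hy'
    rw [Walk.length_reverse] at hn₂
    -- ordering
    have horder : n₁ + n₂ < p.length := by
      by_contra hcon
      push_neg at hcon
      have hk : p.length - n₂ ≤ n₁ := by omega
      have h1 : (p.getVert (p.length - n₂)).head? = some i := hall₁ _ hk
      have h2 : (p.reverse.getVert n₂).head? = some j := hall₂ n₂ le_rfl
      rw [Walk.getVert_reverse] at h2
      rw [h1] at h2
      exact hij (by injection h2)
    -- Lw σ ≤ n₁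
    have qiσ : qi i σ.length (i :: σ) = σ := by rw [qi_cons, List.take_length]
    rw [qiσ] at reachA distA
    have hLσ : Lw σ ≤ n₁ := by
      apply Lw_le_of_dist
      set z := p.getVert n₁ with hz
      have hzq : (qi i σ.length z).toFinset.card ≤ 2 := by
        have hzh : z.head? = some i := hall₁ n₁ le_rfl
        simp only [qi, hzh, if_pos]
        exact le_trans (card_toFinset_take_le _ _) cardA
      have htri := dist_tri (w := ([] : Word)) reachA
      have h2 : (Gt σ.length).dist (qi i σ.length z) [] ≤ 1 := by
        by_cases hq : qi i σ.length z = []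
        · rw [hq]; simp [SimpleGraph.dist_self]
        · exact le_of_eq (SimpleGraph.dist_eq_one_iff_adj.mpr
            (adj_nil_right hq (qi_len _ _ _) hzq))
      omega
    -- Lw τ ≤ n₂
    have qjτ : qi j τ.length (j :: τ) = τ := by rw [qi_cons, List.take_length]
    rw [qjτ] at reachB distB
    have hLτ : Lw τ ≤ n₂ := by
      apply Lw_le_of_dist
      set z := p.reverse.getVert n₂ with hz
      have hzq : (qi j τ.length z).toFinset.card ≤ 2 := by
        have hzh : z.head? = some j := hall₂ n₂ le_rfl
        simp only [qi, hzh, if_pos]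
        exact le_trans (card_toFinset_take_le _ _) cardB
      have htri := dist_tri (w := ([] : Word)) reachB
      have h2 : (Gt τ.length).dist (qi j τ.length z) [] ≤ 1 := by
        by_cases hq : qi j τ.length z = []
        · rw [hq]; simp [SimpleGraph.dist_self]
        · exact le_of_eq (SimpleGraph.dist_eq_one_iff_adj.mpr
            (adj_nil_right hq (qi_len _ _ _) hzq))
      omega
    have : Lw σ + Lw τ ≤ p.length := by omega
    rwa [hp] at this
  · -- upper bound
    have tri1 : (Gt t).dist (i :: σ) (j :: τ) ≤
        (Gt t).dist (i :: σ) [i] + (Gt t).dist [i] (j :: τ) := dist_tri R1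
    have tri2 : (Gt t).dist [i] (j :: τ) ≤
        (Gt t).dist [i] [j] + (Gt t).dist [j] (j :: τ) := dist_tri Adjij.reachable
    have e1 : (Gt t).dist (i :: σ) [i] ≤ Lw σ + 1 :=
      le_trans D1 (le_trans (by apply le_of_eq; rfl) (dist_nil_le_Lw σ))
    have e2 : (Gt t).dist [i] [j] = 1 := SimpleGraph.dist_eq_one_iff_adj.mpr Adjij
    have e3 : (Gt t).dist [j] (j :: τ) ≤ Lw τ + 1 := by
      rw [SimpleGraph.dist_comm]
      exact le_trans D2 (dist_nil_le_Lw τ)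
    show (Gt t).dist (i :: σ) (j :: τ) ≤ Lw σ + Lw τ + 3
    omega
end

section
/- For every t ≥ 1, μ_t = 3π_{t−1}, and consequently π_t = 3π_{t−1} + λ_t + ν_t. -/
open Filter Finset

lemma wordAdj_cons_s13 (i : Letter) {σ τ : Word} (h : WordAdj σ τ) : WordAdj (i::σ) (i::τ) := by
  obtain ⟨hne, β, σ', τ', h1, h2, h3⟩ := h
  exact ⟨by simpa using hne, i::β, σ', τ', by simp [h1], by simp [h2], h3⟩

lemma wordAdj_of_cons {i : Letter} {σ τ : Word} (h : WordAdj (i::σ) (i::τ)) : WordAdj σ τ := by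
  obtain ⟨hne, β, σ', τ', h1, h2, h3⟩ := h
  have hne' : σ ≠ τ := fun e => hne (by rw [e])
  cases β with
  | nil =>
    simp only [List.nil_append] at h1 h2
    rcases h3 with ⟨h, _⟩ | ⟨h, _⟩ | ⟨a, b, k, k', hab, hs, ht⟩
    · rw [h] at h1; simp at h1
    · rw [h] at h2; simp at h2
    · rw [← h1] at hs; rw [← h2] at ht
      obtain ⟨e1, -⟩ := List.cons_eq_cons.mp hs
      obtain ⟨e2, -⟩ := List.cons_eq_cons.mp ht
      exact absurd (e1.symm.trans e2) hab
  | cons c β₀ =>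
    simp only [List.cons_append] at h1 h2
    obtain ⟨-, e1⟩ := List.cons_eq_cons.mp h1
    obtain ⟨-, e2⟩ := List.cons_eq_cons.mp h2
    exact ⟨hne', β₀, σ', τ', e1, e2, h3⟩

lemma cross_card {i : Letter} {σ w : Word} (hw : w.head? ≠ some i)
    (h : WordAdj (i::σ) w) : σ.toFinset.card ≤ 2 := by
  obtain ⟨hne, β, σ', τ', h1, h2, h3⟩ := h
  cases β with
  | cons c β₀ =>
    exfalso
    simp only [List.cons_append] at h1 h2
    obtain ⟨e1, -⟩ := List.cons_eq_cons.mp h1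
    rw [h2] at hw
    exact hw (by rw [List.head?_cons, e1])
  | nil =>
    simp only [List.nil_append] at h1 h2
    rcases h3 with ⟨h, _⟩ | ⟨h, hc⟩ | ⟨a, b, k, k', hab, hs, ht⟩
    · rw [h] at h1; simp at h1
    · rw [← h1] at hc
      exact le_trans (Finset.card_le_card
        (by rw [List.toFinset_cons]; exact Finset.subset_insert _ _)) hc
    · rw [← h1] at hs
      obtain ⟨-, e⟩ := List.cons_eq_cons.mp hs
      rw [e]
      cases k with
      | zero => simp
      | succ n => rw [List.toFinset_replicate_of_ne_zero (by omega)]; simp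

def sMap (i : Letter) (w : Word) : Word := if w.head? = some i then w.tail else []

lemma head_cases (i : Letter) (w : Word) : (∃ σ, w = i :: σ) ∨ w.head? ≠ some i := by
  cases w with
  | nil => right; simp
  | cons a σ =>
    by_cases h : a = i
    · left; exact ⟨σ, by rw [h]⟩
    · right; simpa using h

lemma sMap_adj_aux {t : ℕ} (ht : 1 ≤ t) {i : Letter} {σ w : Word}
    (hw : w.head? ≠ some i) (hlen : σ.length + 1 ≤ t) (h : WordAdj (i::σ) w) :
    σ = [] ∨ (Gt (t-1)).Adj σ [] := by
  by_cases hσ : σ = []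
  · exact Or.inl hσ
  · exact Or.inr ⟨by omega, by simp, hσ, [], σ, [], by simp, by simp,
      Or.inr (Or.inl ⟨rfl, cross_card hw h⟩)⟩

lemma sMap_step {t : ℕ} (ht : 1 ≤ t) (i : Letter) {u w : Word}
    (h : (Gt t).Adj u w) :
    sMap i u = sMap i w ∨ (Gt (t-1)).Adj (sMap i u) (sMap i w) := by
  obtain ⟨hu, hw, hadj⟩ := h
  rcases head_cases i u with ⟨σ, rfl⟩ | hu'
  · rcases head_cases i w with ⟨τ, rfl⟩ | hw'
    · have hs : sMap i (i::σ) = σ := by simp [sMap]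
      have ht' : sMap i (i::τ) = τ := by simp [sMap]
      rw [hs, ht']
      right
      exact ⟨by simp at hu; omega, by simp at hw; omega, wordAdj_of_cons hadj⟩
    · have hs : sMap i (i::σ) = σ := by simp [sMap]
      have ht' : sMap i w = [] := by simp [sMap, hw']
      rw [hs, ht']
      exact sMap_adj_aux ht hw' (by simpa using hu) hadj
  · rcases head_cases i w with ⟨τ, rfl⟩ | hw'
    · have hs : sMap i u = [] := by simp [sMap, hu']
      have ht' : sMap i (i::τ) = τ := by simp [sMap]
      rw [hs, ht']
      rcases sMap_adj_aux ht hu' (by simpa using hw) ((Gt t).symm.symm _ _ ⟨hu, hw, hadj⟩).2.2 with h | h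
      · exact Or.inl h.symm
      · exact Or.inr h.symm
    · left; simp [sMap, hu', hw']

lemma walk_le {V : Type*} {G G' : SimpleGraph V} (f : V → V)
    (hf : ∀ u w, G.Adj u w → f u = f w ∨ G'.Adj (f u) (f w)) :
    ∀ {u v : V} (p : G.Walk u v), ∃ q : G'.Walk (f u) (f v), q.length ≤ p.length := by
  intro u v p
  induction p with
  | nil => exact ⟨SimpleGraph.Walk.nil, le_rfl⟩
  | cons h p ih =>
    obtain ⟨q, hq⟩ := ih
    rcases hf _ _ h with he | ha
    · exact ⟨q.copy he.symm rfl, by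
        rw [SimpleGraph.Walk.length_copy]; exact hq.trans (Nat.le_succ _)⟩
    · exact ⟨SimpleGraph.Walk.cons ha q, by simpa using Nat.succ_le_succ hq⟩

lemma dW_cons {t : ℕ} (ht : 1 ≤ t) (i : Letter) {σ τ : Word}
    (hσ : σ.length ≤ t - 1) (hτ : τ.length ≤ t - 1) :
    dW t (i::σ) (i::τ) = dW (t-1) σ τ := by
  have hcons : ∀ u w : Word, (Gt (t-1)).Adj u w →
      (fun x => i::x) u = (fun x => i::x) w ∨ (Gt t).Adj (i::u) (i::w) := by
    rintro u w ⟨h1, h2, h3⟩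
    exact Or.inr ⟨by simp; omega, by simp; omega, wordAdj_cons_s13 i h3⟩
  have hst : ∀ u w : Word, (Gt t).Adj u w →
      sMap i u = sMap i w ∨ (Gt (t-1)).Adj (sMap i u) (sMap i w) :=
    fun u w h => sMap_step ht i h
  have hsσ : sMap i (i::σ) = σ := by simp [sMap]
  have hsτ : sMap i (i::τ) = τ := by simp [sMap]
  unfold dW
  by_cases hr : (Gt t).Reachable (i::σ) (i::τ)
  · obtain ⟨p, hp⟩ := hr.exists_walk_length_eq_dist
    obtain ⟨q, hq⟩ := walk_le (sMap i) hst p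
    have q' : (Gt (t-1)).Walk σ τ := q.copy hsσ hsτ
    have hq' : (q.copy hsσ hsτ).length ≤ p.length := by
      rw [SimpleGraph.Walk.length_copy]; exact hq
    have h1 : (Gt (t-1)).dist σ τ ≤ (Gt t).dist (i::σ) (i::τ) := by
      calc (Gt (t-1)).dist σ τ ≤ (q.copy hsσ hsτ).length := SimpleGraph.dist_le _
        _ ≤ p.length := hq'
        _ = (Gt t).dist (i::σ) (i::τ) := hp
    have h2 : (Gt t).dist (i::σ) (i::τ) ≤ (Gt (t-1)).dist σ τ := by
      obtain ⟨r, hr'⟩ := (q.copy hsσ hsτ).reachable.exists_walk_length_eq_dist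
      obtain ⟨r', hr''⟩ := walk_le (fun x => i::x) hcons r
      calc (Gt t).dist (i::σ) (i::τ) ≤ r'.length := SimpleGraph.dist_le _
        _ ≤ r.length := hr''
        _ = (Gt (t-1)).dist σ τ := hr'
    exact le_antisymm h2 h1
  · have hr' : ¬ (Gt (t-1)).Reachable σ τ := by
      rintro ⟨r⟩
      obtain ⟨q, -⟩ := walk_le (fun x => i::x) hcons r
      exact hr q.reachable
    rw [SimpleGraph.dist_eq_zero_iff_eq_or_not_reachable.mpr (Or.inr hr),
      SimpleGraph.dist_eq_zero_iff_eq_or_not_reachable.mpr (Or.inr hr')]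

lemma sum_pi_succ {n : ℕ} (f : (Fin (n+1) → Letter) → ℝ) :
    ∑ v : Fin (n+1) → Letter, f v = ∑ i : Letter, ∑ v : Fin n → Letter, f (Fin.cons i v) := by
  rw [← (Fin.consEquiv (fun _ => Letter)).sum_comp, Fintype.sum_prod_type]; rfl

lemma ofFn_cons {n : ℕ} (i : Letter) (v : Fin n → Letter) :
    List.ofFn (Fin.cons i v) = i :: List.ofFn v := by
  simp [List.ofFn_succ]
lemma dW_comm (t : ℕ) (a b : Word) : dW t a b = dW t b a := SimpleGraph.dist_comm

lemma sum_fin_zero (g : Word → ℝ) : ∑ v : Fin 0 → Letter, g (List.ofFn v) = g [] := by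
  simp

lemma sum_Icc_one (t : ℕ) (g : ℕ → ℝ) :
    ∑ k ∈ Finset.Icc 1 t, g k = ∑ k ∈ Finset.range t, g (k+1) := by
  rw [← Finset.Ico_add_one_right_eq_Icc, Finset.sum_Ico_eq_sum_range]
  exact Finset.sum_congr (by simp) fun k _ => by rw [Nat.add_comm]

lemma pair_decomp (t : ℕ) :
    pairSum t = (∑ k ∈ Finset.range t, ∑ l ∈ Finset.range t,
        ∑ v : Fin (k+1) → Letter, ∑ w : Fin (l+1) → Letter,
          (dW t (List.ofFn v) (List.ofFn w) : ℝ))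
      + (∑ l ∈ Finset.range t, ∑ w : Fin (l+1) → Letter, (dW t [] (List.ofFn w) : ℝ))
      + (∑ k ∈ Finset.range t, ∑ v : Fin (k+1) → Letter, (dW t (List.ofFn v) [] : ℝ)) := by
  unfold pairSum
  rw [Finset.sum_range_succ' (fun k => ∑ l ∈ Finset.range (t+1),
    ∑ v : Fin k → Letter, ∑ w : Fin l → Letter, (dW t (List.ofFn v) (List.ofFn w) : ℝ)) t]
  have h0 : ∑ l ∈ Finset.range (t+1), ∑ v : Fin 0 → Letter, ∑ w : Fin l → Letter,
      (dW t (List.ofFn v) (List.ofFn w) : ℝ)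
      = ∑ l ∈ Finset.range t, ∑ w : Fin (l+1) → Letter, (dW t [] (List.ofFn w) : ℝ) := by
    rw [Finset.sum_congr rfl (fun l _ => sum_fin_zero
      (fun x => ∑ w : Fin l → Letter, (dW t x (List.ofFn w) : ℝ)))]
    rw [Finset.sum_range_succ' (fun l => ∑ w : Fin l → Letter, (dW t [] (List.ofFn w) : ℝ)) t]
    rw [sum_fin_zero (fun x => (dW t [] x : ℝ))]
    simp [dW]
  rw [h0]
  have h1 : ∀ k : ℕ, ∑ l ∈ Finset.range (t+1),
      ∑ v : Fin (k+1) → Letter, ∑ w : Fin l → Letter, (dW t (List.ofFn v) (List.ofFn w) : ℝ)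
      = (∑ l ∈ Finset.range t, ∑ v : Fin (k+1) → Letter, ∑ w : Fin (l+1) → Letter,
          (dW t (List.ofFn v) (List.ofFn w) : ℝ))
        + ∑ v : Fin (k+1) → Letter, (dW t (List.ofFn v) [] : ℝ) := by
    intro k
    rw [Finset.sum_range_succ' (fun l => ∑ v : Fin (k+1) → Letter,
      ∑ w : Fin l → Letter, (dW t (List.ofFn v) (List.ofFn w) : ℝ)) t]
    congr 1
    refine Finset.sum_congr rfl fun v _ => sum_fin_zero (fun x => (dW t (List.ofFn v) x : ℝ))
  rw [Finset.sum_congr rfl fun k _ => h1 k, Finset.sum_add_distrib]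
  ring

lemma letter_split (t : ℕ) (k l : ℕ) :
    ∑ v : Fin (k+1) → Letter, ∑ w : Fin (l+1) → Letter, (dW t (List.ofFn v) (List.ofFn w) : ℝ)
    = ∑ i : Letter, ∑ j : Letter, ∑ v : Fin k → Letter, ∑ w : Fin l → Letter,
        (dW t (i :: List.ofFn v) (j :: List.ofFn w) : ℝ) := by
  rw [sum_pi_succ (fun v => ∑ w : Fin (l+1) → Letter, (dW t (List.ofFn v) (List.ofFn w) : ℝ))]
  refine Finset.sum_congr rfl fun i _ => ?_
  have step : ∀ v : Fin k → Letter,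
      ∑ w : Fin (l+1) → Letter, (dW t (List.ofFn (Fin.cons i v)) (List.ofFn w) : ℝ)
      = ∑ j : Letter, ∑ w : Fin l → Letter,
          (dW t (i :: List.ofFn v) (j :: List.ofFn w) : ℝ) := by
    intro v
    rw [sum_pi_succ (fun w => (dW t (List.ofFn (Fin.cons i v)) (List.ofFn w) : ℝ))]
    simp only [ofFn_cons]
  rw [Finset.sum_congr rfl fun v _ => step v]
  exact Finset.sum_comm
lemma Bsymm (t : ℕ) (i j : Letter) :
    (∑ k ∈ Finset.range t, ∑ l ∈ Finset.range t, ∑ v : Fin k → Letter, ∑ w : Fin l → Letter,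
      (dW t (j :: List.ofFn v) (i :: List.ofFn w) : ℝ))
    = ∑ k ∈ Finset.range t, ∑ l ∈ Finset.range t, ∑ v : Fin k → Letter, ∑ w : Fin l → Letter,
      (dW t (i :: List.ofFn v) (j :: List.ofFn w) : ℝ) := by
  have e : ∀ k l : ℕ,
      (∑ v : Fin k → Letter, ∑ w : Fin l → Letter, (dW t (j :: List.ofFn v) (i :: List.ofFn w) : ℝ))
      = ∑ w : Fin l → Letter, ∑ v : Fin k → Letter, (dW t (i :: List.ofFn w) (j :: List.ofFn v) : ℝ) := by
    intro k l
    rw [Finset.sum_comm]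
    exact Finset.sum_congr rfl fun w _ => Finset.sum_congr rfl fun v _ => by rw [dW_comm]
  rw [Finset.sum_congr rfl (fun k _ => Finset.sum_congr rfl (fun l _ => e k l))]
  exact Finset.sum_comm
/-- For every `t ≥ 1`, `μ_t = 3π_{t−1}`, and consequently
`π_t = 3π_{t−1} + λ_t + ν_t`. -/
theorem mu_eq_three_pi (t : ℕ) (ht : 1 ≤ t) :
    muT t = 3 * piT (t - 1) ∧
    piT t = 3 * piT (t - 1) + lambdaT t + nuT t := by
  have key : ∀ k l : ℕ, k ∈ Finset.range t → l ∈ Finset.range t → ∀ (i : Letter)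
      (v : Fin k → Letter) (w : Fin l → Letter),
      dW t (i :: List.ofFn v) (i :: List.ofFn w) = dW (t-1) (List.ofFn v) (List.ofFn w) := by
    intro k l hk hl i v w
    rw [Finset.mem_range] at hk hl
    exact dW_cons ht i (by simpa using Nat.le_sub_one_of_lt hk)
      (by simpa using Nat.le_sub_one_of_lt hl)
  have h1 : (t - 1) + 1 = t := by omega
  have hmu : muT t = 3 * piT (t - 1) := by
    unfold muT piT pairSum
    rw [h1]
    rw [Finset.sum_congr rfl (fun i _ => Finset.sum_congr rfl (fun k hk =>
      Finset.sum_congr rfl (fun l hl => Finset.sum_congr rfl (fun v _ =>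
      Finset.sum_congr rfl (fun w _ => by rw [key k l hk hl i v w])))))]
    simp only [Finset.sum_const, Finset.card_univ, Fintype.card_fin, nsmul_eq_mul]
    push_cast
    ring
  have hdecomp : pairSum t = 2 * muT t + 2 * lambdaT t + 2 * nuT t := by
    rw [pair_decomp t]
    have hL1 : (∑ l ∈ Finset.range t, ∑ w : Fin (l+1) → Letter, (dW t [] (List.ofFn w) : ℝ))
        = lambdaT t := by
      unfold lambdaT
      rw [sum_Icc_one t (fun k => ∑ v : Fin k → Letter, (dW t (List.ofFn v) [] : ℝ))]
      exact Finset.sum_congr rfl fun l _ => Finset.sum_congr rfl fun w _ => by rw [dW_comm]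
    have hL2 : (∑ k ∈ Finset.range t, ∑ v : Fin (k+1) → Letter, (dW t (List.ofFn v) [] : ℝ))
        = lambdaT t := by
      unfold lambdaT
      rw [sum_Icc_one t (fun k => ∑ v : Fin k → Letter, (dW t (List.ofFn v) [] : ℝ))]
    have hT : (∑ k ∈ Finset.range t, ∑ l ∈ Finset.range t,
          ∑ v : Fin (k+1) → Letter, ∑ w : Fin (l+1) → Letter,
            (dW t (List.ofFn v) (List.ofFn w) : ℝ))
        = 2 * muT t + 2 * nuT t := by
      rw [Finset.sum_congr rfl (fun k _ => Finset.sum_congr rfl (fun l _ => letter_split t k l))]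
      unfold muT nuT
      simp only [Fin.sum_univ_three, Finset.sum_add_distrib,
        eq_true (show (0:Letter) < 1 by decide), eq_true (show (0:Letter) < 2 by decide),
        eq_true (show (1:Letter) < 2 by decide),
        eq_false (show ¬((0:Letter) < 0) by decide), eq_false (show ¬((1:Letter) < 0) by decide),
        eq_false (show ¬((1:Letter) < 1) by decide), eq_false (show ¬((2:Letter) < 0) by decide),
        eq_false (show ¬((2:Letter) < 1) by decide), eq_false (show ¬((2:Letter) < 2) by decide),
        if_true, if_false]
      rw [Bsymm t 0 1, Bsymm t 0 2, Bsymm t 1 2]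
      ring
    rw [hL1, hL2, hT]
    ring
  refine ⟨hmu, ?_⟩
  have : piT t = pairSum t / 2 := rfl
  rw [this, hdecomp, ← hmu]
  ring
end

section
/- For every t ≥ 1, the quantity ν_t satisfies 6·κ_{t−1}·(#V_{t−1})² ≤ ν_t ≤ 3·(#V_{t−1})² + 6·(#V_{t−1})²·(κ_{t−1} + 1). -/
open Filter Finset

section Aux

lemma card_le_of_forall_mem {l₁ l₂ : Word} (h : ∀ x ∈ l₁, x ∈ l₂)
    (h2 : l₂.toFinset.card ≤ 2) : l₁.toFinset.card ≤ 2 :=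
  le_trans (Finset.card_le_card fun x hx =>
    List.mem_toFinset.2 (h _ (List.mem_toFinset.1 hx))) h2

lemma suffLen_le (σ : Word) : suffLen σ ≤ σ.length := Nat.findGreatest_le _

lemma suffLen_spec (σ : Word) :
    ((σ.drop (σ.length - suffLen σ)).toFinset).card ≤ 2 := by
  classical
  have h0 : ((σ.drop (σ.length - 0)).toFinset).card ≤ 2 := by simp
  exact Nat.findGreatest_spec
    (P := fun m => ((σ.drop (σ.length - m)).toFinset).card ≤ 2) (Nat.zero_le σ.length) h0

lemma one_le_suffLen {σ : Word} (h : σ ≠ []) : 1 ≤ suffLen σ := by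
  have hlen : 1 ≤ σ.length := List.length_pos_iff.2 h
  exact Nat.le_findGreatest
    (P := fun m => ((σ.drop (σ.length - m)).toFinset).card ≤ 2) hlen (by
    refine le_trans (List.toFinset_card_le _) ?_
    rw [List.length_drop]; omega)

lemma fW_prefix (σ : Word) : fW σ <+: σ := List.take_prefix _ _

lemma fW_length (σ : Word) : (fW σ).length = σ.length - suffLen σ := by
  rw [fW, List.length_take]; omega

lemma fW_lt {σ : Word} (h : σ ≠ []) : (fW σ).length < σ.length := by
  rw [fW_length]
  have := one_le_suffLen h
  have := suffLen_le σ
  have : 0 < σ.length := List.length_pos_iff.2 h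
  omega

lemma fW_nil : fW [] = [] := rfl

lemma fW_iterate_nil : ∀ n (σ : Word), σ.length ≤ n → fW^[n] σ = [] := by
  intro n
  induction n with
  | zero =>
    intro σ h
    simpa using List.length_eq_zero_iff.1 (Nat.le_antisymm h (Nat.zero_le _))
  | succ n ih =>
    intro σ h
    by_cases hσ : σ = []
    · subst hσ
      rw [Function.iterate_succ_apply, fW_nil]
      exact ih [] (by simp)
    · rw [Function.iterate_succ_apply]
      exact ih _ (by have := fW_lt hσ; omega)

lemma omega_mem (σ : Word) : fW^[omegaW σ] σ = [] := by
  have h : {n : ℕ | fW^[n] σ = []}.Nonempty := ⟨σ.length, fW_iterate_nil _ _ le_rfl⟩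
  simpa [omegaW] using Nat.sInf_mem h

lemma omega_nil : omegaW [] = 0 := by
  rw [omegaW]
  exact Nat.sInf_eq_zero.2 (Or.inl rfl)

lemma omega_succ {σ : Word} (h : σ ≠ []) : omegaW σ = omegaW (fW σ) + 1 := by
  have h0 : omegaW σ ≠ 0 := by
    intro h0
    have := omega_mem σ
    rw [h0] at this
    exact h this
  apply le_antisymm
  · refine Nat.sInf_le (show (omegaW (fW σ) + 1) ∈ {n : ℕ | fW^[n] σ = []} from ?_)
    show fW^[omegaW (fW σ) + 1] σ = []
    rw [Function.iterate_succ_apply]; exact omega_mem (fW σ)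
  · obtain ⟨m, hm⟩ := Nat.exists_eq_succ_of_ne_zero h0
    have hmem := omega_mem σ
    rw [hm, Function.iterate_succ_apply] at hmem
    have : omegaW (fW σ) ≤ m := Nat.sInf_le (show m ∈ {n : ℕ | fW^[n] (fW σ) = []} from hmem)
    omega

lemma omega_pos {σ : Word} (h : σ ≠ []) : 1 ≤ omegaW σ := by
  rw [omega_succ h]; omega

end Aux
section Aux2

lemma suffLen_ge {σ : Word} {m : ℕ} (hm : m ≤ σ.length)
    (h : ((σ.drop (σ.length - m)).toFinset).card ≤ 2) : m ≤ suffLen σ :=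
  Nat.le_findGreatest (P := fun m => ((σ.drop (σ.length - m)).toFinset).card ≤ 2) hm h

lemma suffLen_gt {σ : Word} {m : ℕ} (hm : m ≤ σ.length) (hgt : suffLen σ < m) :
    ¬ ((σ.drop (σ.length - m)).toFinset).card ≤ 2 :=
  Nat.findGreatest_is_greatest
    (P := fun m => ((σ.drop (σ.length - m)).toFinset).card ≤ 2) hgt hm

lemma omega_prefix_aux : ∀ n (σ π : Word), σ.length ≤ n → π <+: σ →
    omegaW π ≤ omegaW σ := by
  intro n
  induction n with
  | zero =>
    intro σ π h hpre
    have hσ : σ = [] := List.length_eq_zero_iff.1 (Nat.le_antisymm h (Nat.zero_le _))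
    subst hσ
    rw [List.prefix_nil.1 hpre]
  | succ n ih =>
    intro σ π hlen hpre
    by_cases hσ : σ = []
    · subst hσ; rw [List.prefix_nil.1 hpre]
    rcases eq_or_ne π σ with rfl | hne
    · exact le_rfl
    have hfp : fW σ <+: σ := fW_prefix σ
    have hflt : (fW σ).length < σ.length := fW_lt hσ
    by_cases hle : π.length ≤ (fW σ).length
    · have hππ : π <+: fW σ := List.prefix_of_prefix_length_le hpre hfp hle
      have h1 : omegaW π ≤ omegaW (fW σ) := ih (fW σ) π (by omega) hππ
      rw [omega_succ hσ]; omega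
    · push_neg at hle
      have hπne : π ≠ [] := by
        intro h; subst h; simp at hle
      have hπeq : π = σ.take π.length := List.prefix_iff_eq_take.1 hpre
      have hkey : ((π.drop (σ.length - suffLen σ)).toFinset).card ≤ 2 := by
        refine card_le_of_forall_mem ?_ (suffLen_spec σ)
        intro x hx
        rw [hπeq, List.drop_take] at hx
        exact List.take_subset _ _ hx
      have hm : π.length - (fW σ).length ≤ suffLen π := by
        apply suffLen_ge (by omega)
        have he : π.length - (π.length - (fW σ).length) = σ.length - suffLen σ := by
          rw [fW_length] at hle ⊢; omega
        rw [he]; exact hkey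
      have hfπ : (fW π).length ≤ (fW σ).length := by
        rw [fW_length]; omega
      have hfππ : fW π <+: fW σ :=
        List.prefix_of_prefix_length_le ((fW_prefix π).trans hpre) hfp hfπ
      have h2 : omegaW (fW π) ≤ omegaW (fW σ) := ih (fW σ) (fW π) (by omega) hfππ
      rw [omega_succ hσ, omega_succ hπne]; omega

lemma omega_prefix {σ π : Word} (hpre : π <+: σ) : omegaW π ≤ omegaW σ :=
  omega_prefix_aux σ.length σ π le_rfl hpre

lemma omega_append_le {β s : Word} (h : s.toFinset.card ≤ 2) :
    omegaW (β ++ s) ≤ omegaW β + 1 := by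
  rcases eq_or_ne s [] with rfl | hs
  · simp
  have hne : β ++ s ≠ [] := by simp [hs]
  have hsuff : s.length ≤ suffLen (β ++ s) := by
    apply suffLen_ge (by simp)
    have he : (β ++ s).length - s.length = β.length := by simp
    rw [he, List.drop_left]
    exact h
  have hlen : (fW (β ++ s)).length ≤ β.length := by
    rw [fW_length, List.length_append]; omega
  have hpre : fW (β ++ s) <+: β :=
    List.prefix_of_prefix_length_le (fW_prefix _) (β.prefix_append s) hlen
  rw [omega_succ hne]
  have := omega_prefix hpre
  omega

lemma card_cons_replicate (i j : Letter) (k : ℕ) :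
    ((i :: List.replicate k j).toFinset).card ≤ 2 := by
  have hsub : (i :: List.replicate k j).toFinset ⊆ {i, j} := by
    intro x hx
    simp only [List.mem_toFinset, List.mem_cons, List.mem_replicate] at hx
    rcases hx with rfl | ⟨_, rfl⟩ <;> simp
  refine le_trans (Finset.card_le_card hsub) ?_
  refine le_trans (Finset.card_insert_le _ _) ?_
  simp

lemma adj_decomp {t : ℕ} {σ τ : Word} (h : (Gt t).Adj σ τ) :
    ∃ β σ' τ' : Word, σ = β ++ σ' ∧ τ = β ++ τ' ∧
      σ'.toFinset.card ≤ 2 ∧ τ'.toFinset.card ≤ 2 := by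
  obtain ⟨-, -, -, β, σ', τ', e1, e2, hcase⟩ := (h : σ.length ≤ t ∧ τ.length ≤ t ∧ WordAdj σ τ)
  refine ⟨β, σ', τ', e1, e2, ?_, ?_⟩ <;>
    rcases hcase with ⟨h1, h2⟩ | ⟨h1, h2⟩ | ⟨i, j, k, k', hij, h1, h2⟩ <;>
      subst_vars <;>
        first
          | exact h2
          | exact card_cons_replicate _ _ _
          | simp

lemma adj_omega {t : ℕ} {σ τ : Word} (h : (Gt t).Adj σ τ) :
    omegaW τ ≤ omegaW σ + 1 := by
  obtain ⟨β, σ', τ', rfl, rfl, h1, h2⟩ := adj_decomp h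
  have ha := omega_append_le (β := β) h2
  have hb : omegaW β ≤ omegaW (β ++ σ') := omega_prefix (β.prefix_append σ')
  omega

end Aux2
section Aux3

lemma card_le_two_omega {σ : Word} (h : σ.toFinset.card ≤ 2) : omegaW σ ≤ 1 := by
  have := omega_append_le (β := []) (s := σ) h
  simpa [omega_nil] using this

lemma adj_heads {t : ℕ} {σ τ : Word} (h : (Gt t).Adj σ τ) {i : Letter}
    (hσ : σ.head? = some i) (hτ : τ.head? ≠ some i) :
    σ.toFinset.card ≤ 2 ∧ τ.toFinset.card ≤ 2 := by
  obtain ⟨-, -, -, β, σ', τ', e1, e2, hcase⟩ := (h : σ.length ≤ t ∧ τ.length ≤ t ∧ WordAdj σ τ)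
  have hβ : β = [] := by
    cases β with
    | nil => rfl
    | cons b l =>
      exfalso
      rw [e1] at hσ
      simp at hσ
      apply hτ
      rw [e2, hσ]
      simp
  subst hβ
  simp only [List.nil_append] at e1 e2
  subst e1; subst e2
  rcases hcase with ⟨h1, h2⟩ | ⟨h1, h2⟩ | ⟨i', j', k, k', hij, h1, h2⟩
  · subst h1; simp at hσ
  · subst h1; exact ⟨h2, by simp⟩
  · subst h1; subst h2
    exact ⟨card_cons_replicate _ _ _, card_cons_replicate _ _ _⟩

lemma omega_walk_le {t : ℕ} {u v : Word} (p : (Gt t).Walk u v) :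
    omegaW v ≤ omegaW u + p.length := by
  induction p with
  | nil => simp
  | cons h q ih =>
    have := adj_omega h
    rw [SimpleGraph.Walk.length_cons]
    omega

lemma crossing_walk {t : ℕ} {i j : Letter} (hij : i ≠ j) :
    ∀ {u v : Word} (p : (Gt t).Walk u v), u.head? = some i → v.head? = some j →
      omegaW u + omegaW v ≤ p.length + 1 := by
  intro u v p
  induction p with
  | nil =>
    intro h1 h2
    rw [h1] at h2
    simp at h2
    exact absurd h2 hij
  | @cons a b c h q ih =>
    intro h1 h2
    rw [SimpleGraph.Walk.length_cons]
    by_cases hb : b.head? = some i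
    · have h3 := ih hb h2
      have h4 := adj_omega h.symm
      omega
    · have hc := adj_heads h h1 hb
      have h5 : omegaW a ≤ 1 := card_le_two_omega hc.1
      have h6 : omegaW b ≤ 1 := card_le_two_omega hc.2
      have h7 : omegaW c ≤ omegaW b + q.length := omega_walk_le q
      omega

lemma walk_down (t : ℕ) : ∀ n (x β : Word), x.length ≤ n → β.length + x.length ≤ t →
    ∃ p : (Gt t).Walk (β ++ x) β, p.length = omegaW x := by
  intro n
  induction n with
  | zero =>
    intro x β h1 h2
    have hx : x = [] := List.length_eq_zero_iff.1 (Nat.le_antisymm h1 (Nat.zero_le _))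
    subst hx
    exact ⟨SimpleGraph.Walk.nil.copy (by simp) rfl, by simp [omega_nil]⟩
  | succ n ih =>
    intro x β h1 h2
    rcases eq_or_ne x [] with rfl | hx
    · exact ⟨SimpleGraph.Walk.nil.copy (by simp) rfl, by simp [omega_nil]⟩
    have hflt : (fW x).length < x.length := fW_lt hx
    obtain ⟨p, hp⟩ := ih (fW x) β (by omega) (by omega)
    have hfx : fW x ++ x.drop ((fW x).length) = x := by
      conv_rhs => rw [← List.take_append_drop ((fW x).length) x]
      congr 1
      rw [fW_length, fW]
    have hadj : (Gt t).Adj (β ++ x) (β ++ fW x) := by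
      show _ ∧ _ ∧ WordAdj _ _
      refine ⟨by simp; omega, by simp; omega, ?_, β ++ fW x, x.drop ((fW x).length), [],
        ?_, by simp, Or.inr (Or.inl ⟨rfl, ?_⟩)⟩
      · intro hcon
        have := congrArg List.length hcon
        simp at this
        omega
      · rw [List.append_assoc, hfx]
      · rw [fW_length]
        exact suffLen_spec x
    refine ⟨SimpleGraph.Walk.cons hadj p, ?_⟩
    rw [SimpleGraph.Walk.length_cons, hp, omega_succ hx]

lemma reachable_nil {t : ℕ} {σ : Word} (h : σ.length ≤ t) : (Gt t).Reachable σ [] := by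
  obtain ⟨p, -⟩ := walk_down t σ.length σ [] le_rfl (by simpa using h)
  exact ⟨p.copy (List.nil_append σ) rfl⟩

lemma dist_nil {t : ℕ} {σ : Word} (h : σ.length ≤ t) : dW t σ [] = omegaW σ := by
  obtain ⟨p, hp⟩ := walk_down t σ.length σ [] le_rfl (by simpa using h)
  apply le_antisymm
  · have := SimpleGraph.dist_le (p.copy (List.nil_append σ) rfl)
    rw [SimpleGraph.Walk.length_copy, hp] at this
    exact this
  · obtain ⟨q, hq⟩ := (reachable_nil h).exists_walk_length_eq_dist
    have := omega_walk_le q.reverse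
    rw [SimpleGraph.Walk.length_reverse, hq, omega_nil] at this
    simpa [dW] using this

lemma Lw_eq {σ : Word} (h : σ ≠ []) : Lw σ = omegaW σ - 1 := by
  rw [Lw, if_neg h, dist_nil le_rfl]

lemma omega_le_L (σ : Word) : omegaW σ ≤ Lw σ + 1 := by
  rcases eq_or_ne σ [] with rfl | h
  · simp [omega_nil]
  · rw [Lw_eq h]
    have := omega_pos h
    omega

end Aux3
section Aux4

lemma suffLen_lt {x : Word} (h : ¬ x.toFinset.card ≤ 2) : suffLen x < x.length := by
  rcases Nat.lt_or_ge (suffLen x) x.length with h1 | h1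
  · exact h1
  · exfalso
    have h2 : suffLen x = x.length := le_antisymm (suffLen_le x) h1
    have := suffLen_spec x
    rw [h2, Nat.sub_self, List.drop_zero] at this
    exact h this

lemma omega_cons_ge_aux : ∀ n (x : Word) (i : Letter), x.length ≤ n →
    omegaW x ≤ omegaW (i :: x) := by
  intro n
  induction n with
  | zero =>
    intro x i h
    have hx : x = [] := List.length_eq_zero_iff.1 (Nat.le_antisymm h (Nat.zero_le _))
    subst hx
    simp [omega_nil]
  | succ n ih =>
    intro x i h
    by_cases hc : x.toFinset.card ≤ 2
    · refine le_trans (card_le_two_omega hc) (omega_pos (by simp))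
    have hx : x ≠ [] := by rintro rfl; simp at hc
    have hslt : suffLen x < x.length := suffLen_lt hc
    have hseq : suffLen (i :: x) = suffLen x := by
      apply le_antisymm
      · by_contra hgt
        push_neg at hgt
        have hm := suffLen_spec (i :: x)
        set m := suffLen (i :: x) with hmdef
        have hmle : m ≤ x.length + 1 := by
          have := suffLen_le (i :: x); simpa using this
        rcases Nat.lt_or_ge m (x.length + 1) with hm1 | hm1
        · have hdrop : (i :: x).drop ((i :: x).length - m) = x.drop (x.length - m) := by
            have h1 : (i :: x).length - m = (x.length - m) + 1 := by
              simp only [List.length_cons]; omega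
            rw [h1, List.drop_succ_cons]
          rw [hdrop] at hm
          exact suffLen_gt (by omega) hgt hm
        · have hmeq : m = x.length + 1 := le_antisymm hmle hm1
          rw [hmeq] at hm
          simp only [List.length_cons, Nat.sub_self, List.drop_zero] at hm
          apply hc
          refine card_le_of_forall_mem (fun a ha => ?_) hm
          simp [ha]
      · apply suffLen_ge (by simp; omega)
        have h1 : (i :: x).length - suffLen x = (x.length - suffLen x) + 1 := by
          simp only [List.length_cons]; omega
        rw [h1, List.drop_succ_cons]
        exact suffLen_spec x
    have hfW : fW (i :: x) = i :: fW x := by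
      rw [fW, fW, hseq]
      have h1 : (i :: x).length - suffLen x = (x.length - suffLen x) + 1 := by
        simp only [List.length_cons]; omega
      rw [h1, List.take_succ_cons]
    have h2 : omegaW (fW x) ≤ omegaW (i :: fW x) := by
      apply ih
      have := fW_lt hx
      omega
    rw [omega_succ hx, omega_succ (show (i : Letter) :: x ≠ [] by simp), hfW]
    omega

lemma omega_cons_ge (x : Word) (i : Letter) : omegaW x ≤ omegaW (i :: x) :=
  omega_cons_ge_aux x.length x i le_rfl

lemma L_lt_omega_cons (x : Word) (i : Letter) : Lw x + 1 ≤ omegaW (i :: x) := by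
  rcases eq_or_ne x [] with rfl | hx
  · have : (1:ℕ) ≤ omegaW [i] := omega_pos (by simp)
    simp [Lw]
    omega
  · rw [Lw_eq hx]
    have h1 := omega_cons_ge x i
    have h2 := omega_pos hx
    omega

lemma adj_singles {t : ℕ} (ht : 1 ≤ t) {i j : Letter} (hij : i ≠ j) :
    (Gt t).Adj [i] [j] := by
  show _ ∧ _ ∧ WordAdj _ _
  refine ⟨by simpa using ht, by simpa using ht, ?_, [], [i], [j], by simp, by simp,
    Or.inr (Or.inr ⟨i, j, 0, 0, hij, by simp, by simp⟩)⟩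
  simp [hij]

lemma pair_lower {t : ℕ} {i j : Letter} (hij : i ≠ j) {x y : Word}
    (hx : x.length < t) (hy : y.length < t) :
    Lw x + Lw y ≤ dW t (i :: x) (j :: y) := by
  have hr1 : (Gt t).Reachable (i :: x) [] := reachable_nil (by simp; omega)
  have hr2 : (Gt t).Reachable (j :: y) [] := reachable_nil (by simp; omega)
  obtain ⟨p, hp⟩ := (hr1.trans hr2.symm).exists_walk_length_eq_dist
  have hcross := crossing_walk hij p (by simp) (by simp)
  have h1 := L_lt_omega_cons x i
  have h2 := L_lt_omega_cons y j
  rw [hp] at hcross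
  simpa [dW] using by omega
  
lemma pair_upper {t : ℕ} (ht : 1 ≤ t) {i j : Letter} (hij : i ≠ j) {x y : Word}
    (hx : x.length < t) (hy : y.length < t) :
    dW t (i :: x) (j :: y) ≤ Lw x + Lw y + 3 := by
  obtain ⟨p1, hp1⟩ := walk_down t x.length x [i] le_rfl (by simp; omega)
  obtain ⟨p2, hp2⟩ := walk_down t y.length y [j] le_rfl (by simp; omega)
  have e := adj_singles ht hij
  let q : (Gt t).Walk (i :: x) (j :: y) :=
    ((p1.copy rfl rfl).append ((SimpleGraph.Walk.cons e p2.reverse)))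
  have hq : q.length = omegaW x + omegaW y + 1 := by
    simp [q, SimpleGraph.Walk.length_append, SimpleGraph.Walk.length_cons,
      SimpleGraph.Walk.length_reverse, hp1, hp2]
    omega
  have hd := SimpleGraph.dist_le q
  rw [hq] at hd
  have h1 := omega_le_L x
  have h2 := omega_le_L y
  simp only [dW]
  omega

end Aux4
lemma sum_mul_sum_quad (t : ℕ) (f g : (k : ℕ) → (Fin k → Letter) → ℝ) :
    (∑ k ∈ Finset.range t, ∑ v : Fin k → Letter, f k v) *
      (∑ l ∈ Finset.range t, ∑ w : Fin l → Letter, g l w) =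
    ∑ k ∈ Finset.range t, ∑ l ∈ Finset.range t,
      ∑ v : Fin k → Letter, ∑ w : Fin l → Letter, f k v * g l w := by
  rw [Finset.sum_mul_sum]
  refine Finset.sum_congr rfl fun k _ => ?_
  refine Finset.sum_congr rfl fun l _ => ?_
  rw [Finset.sum_mul_sum]

/-- For every `t ≥ 1`,
`6·κ_{t−1}·(#V_{t−1})² ≤ ν_t ≤ 3·(#V_{t−1})² + 6·(#V_{t−1})²·(κ_{t−1} + 1)`. -/
theorem nu_bounds (t : ℕ) (ht : 1 ≤ t) :
    6 * kappa (t - 1) * (Nv (t - 1)) ^ 2 ≤ nuT t ∧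
    nuT t ≤ 3 * (Nv (t - 1)) ^ 2 + 6 * (Nv (t - 1)) ^ 2 * (kappa (t - 1) + 1) := by
  have ht' : t - 1 + 1 = t := by omega
  have hN : Nv (t - 1) = ((3 : ℝ) ^ t - 1) / 2 := by rw [Nv, ht']
  have hNpos : 0 < Nv (t - 1) := by
    rw [hN]
    have h3 : (1 : ℝ) < 3 ^ t := by
      apply one_lt_pow₀ (by norm_num) (by omega)
    linarith
  have hcount : (∑ k ∈ Finset.range t, ∑ _v : Fin k → Letter, (1 : ℝ)) = Nv (t - 1) := by
    have h1 : ∀ l : ℕ, (∑ _w : Fin l → Letter, (1 : ℝ)) = 3 ^ l := by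
      intro l
      rw [Finset.sum_const, Finset.card_univ]
      simp [Fintype.card_fun]
    rw [Finset.sum_congr rfl fun l _ => h1 l, geom_sum_eq (by norm_num : (3:ℝ) ≠ 1) t, hN]
    norm_num
  have hκ : kappa (t - 1) * Nv (t - 1)
      = ∑ k ∈ Finset.range t, ∑ v : Fin k → Letter, (Lw (List.ofFn v) : ℝ) := by
    rw [kappa, ht', div_mul_cancel₀ _ (ne_of_gt hNpos)]
  -- notation
  set S : ℝ := ∑ k ∈ Finset.range t, ∑ v : Fin k → Letter, (Lw (List.ofFn v) : ℝ) with hSdef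
  set N : ℝ := Nv (t - 1) with hNdef
  -- lower bound on each inner quadruple sum
  have hlow : ∀ i j : Letter, i ≠ j →
      S * N + N * S ≤ ∑ k ∈ Finset.range t, ∑ l ∈ Finset.range t,
        ∑ v : Fin k → Letter, ∑ w : Fin l → Letter,
          (dW t (i :: List.ofFn v) (j :: List.ofFn w) : ℝ) := by
    intro i j hij
    have hsplit : S * N + N * S = ∑ k ∈ Finset.range t, ∑ l ∈ Finset.range t,
        ∑ v : Fin k → Letter, ∑ w : Fin l → Letter,
          ((Lw (List.ofFn v) : ℝ) * 1 + 1 * (Lw (List.ofFn w) : ℝ)) := by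
      rw [hSdef, ← hcount,
        sum_mul_sum_quad t (fun k v => (Lw (List.ofFn v) : ℝ)) (fun l w => (1 : ℝ)),
        sum_mul_sum_quad t (fun k v => (1 : ℝ)) (fun l w => (Lw (List.ofFn w) : ℝ))]
      simp only [Finset.sum_add_distrib]
    rw [hsplit]
    refine Finset.sum_le_sum fun k hk => Finset.sum_le_sum fun l hl =>
      Finset.sum_le_sum fun v _ => Finset.sum_le_sum fun w _ => ?_
    rw [mul_one, one_mul]
    have hx : (List.ofFn v).length < t := by simpa using Finset.mem_range.1 hk
    have hy : (List.ofFn w).length < t := by simpa using Finset.mem_range.1 hl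
    exact_mod_cast pair_lower hij hx hy
  -- upper bound on each inner quadruple sum
  have hupp : ∀ i j : Letter, i ≠ j →
      (∑ k ∈ Finset.range t, ∑ l ∈ Finset.range t,
        ∑ v : Fin k → Letter, ∑ w : Fin l → Letter,
          (dW t (i :: List.ofFn v) (j :: List.ofFn w) : ℝ))
        ≤ (S + 3 * N) * N + N * S := by
    intro i j hij
    have h3 : (∑ k ∈ Finset.range t, ∑ v : Fin k → Letter,
        ((Lw (List.ofFn v) : ℝ) + 3)) = S + 3 * N := by
      simp only [Finset.sum_add_distrib]
      rw [hSdef, ← hcount]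
      congr 1
      rw [Finset.mul_sum]
      refine Finset.sum_congr rfl fun k _ => ?_
      rw [Finset.mul_sum]
      refine Finset.sum_congr rfl fun v _ => ?_
      norm_num
    have hsplit : (S + 3 * N) * N + N * S = ∑ k ∈ Finset.range t, ∑ l ∈ Finset.range t,
        ∑ v : Fin k → Letter, ∑ w : Fin l → Letter,
          (((Lw (List.ofFn v) : ℝ) + 3) * 1 + 1 * (Lw (List.ofFn w) : ℝ)) := by
      rw [← h3, hSdef, ← hcount,
        sum_mul_sum_quad t (fun k v => ((Lw (List.ofFn v) : ℝ) + 3)) (fun l w => (1 : ℝ)),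
        sum_mul_sum_quad t (fun k v => (1 : ℝ)) (fun l w => (Lw (List.ofFn w) : ℝ))]
      simp only [Finset.sum_add_distrib]
    rw [hsplit]
    refine Finset.sum_le_sum fun k hk => Finset.sum_le_sum fun l hl =>
      Finset.sum_le_sum fun v _ => Finset.sum_le_sum fun w _ => ?_
    rw [mul_one, one_mul]
    have hx : (List.ofFn v).length < t := by simpa using Finset.mem_range.1 hk
    have hy : (List.ofFn w).length < t := by simpa using Finset.mem_range.1 hl
    have := pair_upper ht hij hx hy
    have hcast : (dW t (i :: List.ofFn v) (j :: List.ofFn w) : ℝ)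
        ≤ ((Lw (List.ofFn v) : ℕ) : ℝ) + ((Lw (List.ofFn w) : ℕ) : ℝ) + 3 := by
      exact_mod_cast this
    linarith
  -- counting the three ordered pairs i < j
  have hcnt : ∀ c : ℝ, (∑ i : Letter, ∑ j : Letter, if i < j then c else 0) = 3 * c := by
    intro c
    simp [Fin.sum_univ_succ]
    ring
  constructor
  · have hle : (∑ i : Letter, ∑ j : Letter, if i < j then (S * N + N * S) else 0) ≤ nuT t := by
      rw [nuT]
      refine Finset.sum_le_sum fun i _ => Finset.sum_le_sum fun j _ => ?_
      split_ifs with h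
      · exact hlow i j (ne_of_lt h)
      · exact le_rfl
    rw [hcnt] at hle
    calc 6 * kappa (t - 1) * N ^ 2 = 3 * ((kappa (t-1) * N) * N + N * (kappa (t-1) * N)) := by
          ring
      _ = 3 * (S * N + N * S) := by rw [hκ]
      _ ≤ nuT t := hle
  · have hle : nuT t ≤ ∑ i : Letter, ∑ j : Letter,
        if i < j then ((S + 3 * N) * N + N * S) else 0 := by
      rw [nuT]
      refine Finset.sum_le_sum fun i _ => Finset.sum_le_sum fun j _ => ?_
      split_ifs with h
      · exact hupp i j (ne_of_lt h)
      · exact le_rfl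
    rw [hcnt] at hle
    calc nuT t ≤ 3 * ((S + 3 * N) * N + N * S) := hle
      _ = 3 * N ^ 2 + 6 * N ^ 2 * (kappa (t - 1) + 1) := by
          rw [← hκ]; ring
end

section
/- For l ≥ 3 and integers k₁ ≥ 1, k₂,…,k_l ≥ 2: W_{k₁⋯k_l} = (2^{k₁} − 1) · [∏_{i=2}^{l−1} 2(2^{k_i − 1} − 1)] · 3(2^{k_l} − 2). For l = 2: W_{k₁k₂} = (2^{k₁} − 1) · 3(2^{k₂} − 2). For l = 1: W_{k₁} = 3·2^{k₁} − 3. -/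
open Filter Finset

def allWords : ℕ → Finset Word
  | 0 => {[]}
  | k+1 => (Finset.univ ×ˢ allWords k).image (fun p => p.1 :: p.2)

lemma mem_allWords {k : ℕ} {w : Word} : w ∈ allWords k ↔ w.length = k := by
  induction k generalizing w with
  | zero => simp [allWords, List.length_eq_zero_iff]
  | succ k ih => cases w <;> simp [allWords, ih]

lemma filter_wordsIn_succ (k : ℕ) (S : Finset Letter) [DecidablePred fun w : Word => w.toFinset ⊆ S] :
    (allWords (k+1)).filter (fun w => w.toFinset ⊆ S) =
      (S ×ˢ (allWords k).filter (fun w => w.toFinset ⊆ S)).image (fun p => p.1 :: p.2) := by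
  ext w
  cases w with
  | nil => simp [mem_allWords]
  | cons a w =>
    simp only [mem_filter, mem_allWords, List.length_cons, Nat.succ_inj, mem_image, mem_product,
      Prod.exists, List.toFinset_cons, insert_subset_iff]
    constructor
    · rintro ⟨h1, h2, h3⟩; exact ⟨a, w, ⟨h2, h1, h3⟩, rfl⟩
    · rintro ⟨a', w', ⟨h2, h1, h3⟩, he⟩
      obtain ⟨rfl, rfl⟩ : a' = a ∧ w' = w := by simpa using he
      exact ⟨h1, h2, h3⟩

lemma card_wordsIn (k : ℕ) (S : Finset Letter) [DecidablePred fun w : Word => w.toFinset ⊆ S] :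
    ((allWords k).filter (fun w => w.toFinset ⊆ S)).card = S.card ^ k := by
  induction k with
  | zero => rw [show allWords 0 = {[]} from rfl, Finset.filter_singleton]; simp
  | succ k ih =>
    rw [filter_wordsIn_succ, Finset.card_image_of_injective _ (by intro p q h; simpa [Prod.ext_iff] using h),
      Finset.card_product, ih, pow_succ]
    ring

lemma card_wordsInLast (k : ℕ) (S : Finset Letter) (c : Letter) (hc : c ∈ S)
    [DecidablePred fun w : Word => w.toFinset ⊆ S ∧ w.getLast? = some c] :
    ((allWords (k+1)).filter (fun w => w.toFinset ⊆ S ∧ w.getLast? = some c)).card = S.card ^ k := by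
  induction k with
  | zero =>
    have h1 : (allWords 1).filter (fun w => w.toFinset ⊆ S ∧ w.getLast? = some c) = {[c]} := by
      ext w
      match w with
      | [] => simp [mem_allWords]
      | [a] =>
        simp only [mem_filter, mem_allWords, List.length_singleton, List.toFinset_cons,
          List.toFinset_nil, LawfulSingleton.insert_empty_eq, singleton_subset_iff, List.getLast?_singleton,
          Option.some_inj, mem_singleton, List.cons.injEq, and_true]
        exact ⟨fun h => h.2.2, fun h => ⟨trivial, h ▸ hc, h⟩⟩
      | a :: b :: w => simp [mem_allWords]
    rw [h1]; simp
  | succ k ih =>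
    have hstep : (allWords (k+2)).filter (fun w => w.toFinset ⊆ S ∧ w.getLast? = some c) =
        (S ×ˢ (allWords (k+1)).filter (fun w => w.toFinset ⊆ S ∧ w.getLast? = some c)).image
          (fun p => p.1 :: p.2) := by
      ext w
      match w with
      | [] => simp [mem_allWords]
      | [a] => simp [mem_allWords]
      | a :: b :: w =>
        simp only [mem_filter, mem_allWords, List.length_cons, Nat.succ_inj, mem_image,
          mem_product, Prod.exists, List.toFinset_cons, insert_subset_iff,
          List.getLast?_cons_cons]
        constructor
        · rintro ⟨h1, ⟨h2, h3⟩, h4⟩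
          exact ⟨a, b :: w, ⟨h2, by simpa using h1, by simpa [insert_subset_iff] using h3, h4⟩, rfl⟩
        · rintro ⟨a', w', ⟨h2, h1, h3, h4⟩, he⟩
          obtain ⟨rfl, rfl⟩ : a' = a ∧ w' = b :: w := by simpa using he
          refine ⟨by simpa using h1, ⟨h2, by simpa [insert_subset_iff] using h3⟩, h4⟩
    rw [hstep, Finset.card_image_of_injective _ (by intro p q h; simpa [Prod.ext_iff] using h),
      Finset.card_product, ih, pow_succ]
    ring

lemma getLast?_replicate {k : ℕ} (hk : 1 ≤ k) (a : Letter) :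
    (List.replicate k a).getLast? = some a := by
  obtain ⟨m, rfl⟩ : ∃ m, k = m + 1 := ⟨k - 1, by omega⟩
  rw [List.getLast?_eq_getLast_of_ne_nil (by simp), List.getLast_replicate_succ]

lemma mem_of_getLast?_eq {l : Word} {a : Letter} (h : l.getLast? = some a) : a ∈ l := by
  obtain ⟨h1, rfl⟩ := List.mem_getLast?_eq_getLast h
  exact List.getLast_mem h1

lemma replicate_inj {k : ℕ} (hk : 1 ≤ k) : Function.Injective (fun a : Letter => List.replicate k a) := by
  intro a b h
  obtain ⟨m, rfl⟩ : ∃ m, k = m + 1 := ⟨k - 1, by omega⟩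
  have h2 : a = b ∧ (m = 0 ∨ a = b) := by simpa [List.replicate_succ] using h
  exact h2.1

lemma card_compl_singleton (c : Letter) : ({c} : Finset Letter)ᶜ.card = 2 := by
  rw [Finset.card_compl]; simp

lemma card_flast (k : ℕ) (hk : 1 ≤ k) (c : Letter) :
    ((allWords k).filter (fun w => w.toFinset = ({c} : Finset Letter)ᶜ)).card = 2^k - 2 := by
  have hS := card_compl_singleton c
  have hsub : ((allWords k).filter (fun w => w.toFinset ⊆ ({c} : Finset Letter)ᶜ)).card = 2^k := by
    rw [card_wordsIn, hS]
  have hsplit : (allWords k).filter (fun w => w.toFinset ⊆ ({c} : Finset Letter)ᶜ) =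
      (allWords k).filter (fun w => w.toFinset = ({c} : Finset Letter)ᶜ) ∪
        ({c} : Finset Letter)ᶜ.image (fun a => List.replicate k a) := by
    ext w
    simp only [mem_filter, mem_union, mem_image, mem_allWords]
    constructor
    · rintro ⟨hlen, hs⟩
      by_cases he : w.toFinset = ({c} : Finset Letter)ᶜ
      · exact Or.inl ⟨hlen, he⟩
      · right
        have hne : w ≠ [] := by rintro rfl; simp at hlen; omega
        have hlt : w.toFinset.card < 2 :=
          hS ▸ Finset.card_lt_card (HasSubset.Subset.ssubset_of_ne hs he)
        have hpos : 0 < w.toFinset.card := by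
          rw [Finset.card_pos, Finset.nonempty_iff_ne_empty]
          simpa using hne
        obtain ⟨a, ha⟩ := Finset.card_eq_one.mp (by omega : w.toFinset.card = 1)
        refine ⟨a, hs (ha ▸ Finset.mem_singleton_self a), ?_⟩
        symm
        rw [List.eq_replicate_iff]
        exact ⟨hlen, fun b hb => by simpa [ha] using List.mem_toFinset.mpr hb⟩
    · rintro (⟨h1, h2⟩ | ⟨a, ha, rfl⟩)
      · exact ⟨h1, h2.le⟩
      · refine ⟨by simp, ?_⟩
        rw [List.toFinset_replicate_of_ne_zero (by omega)]
        exact Finset.singleton_subset_iff.mpr ha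
  have hdisj : Disjoint ((allWords k).filter (fun w => w.toFinset = ({c} : Finset Letter)ᶜ))
      (({c} : Finset Letter)ᶜ.image (fun a => List.replicate k a)) := by
    rw [Finset.disjoint_left]
    rintro w hw hw2
    obtain ⟨a, _, rfl⟩ := Finset.mem_image.mp hw2
    have := (Finset.mem_filter.mp hw).2
    rw [List.toFinset_replicate_of_ne_zero (by omega)] at this
    have : (1 : ℕ) = 2 := by rw [← Finset.card_singleton a, this, hS]
    omega
  have himg : (({c} : Finset Letter)ᶜ.image (fun a => List.replicate k a)).card = 2 := by
    rw [Finset.card_image_of_injective _ (replicate_inj hk), hS]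
  have hu := Finset.card_union_of_disjoint hdisj
  rw [← hsplit, hsub, himg] at hu
  have : 2 ≤ 2^k := by calc (2:ℕ) = 2^1 := rfl
                          _ ≤ 2^k := Nat.pow_le_pow_right (by norm_num) hk
  omega

lemma card_fmid (k : ℕ) (hk : 1 ≤ k) (c c' : Letter) (hcc : c' ≠ c) :
    ((allWords k).filter
      (fun w => w.toFinset = ({c} : Finset Letter)ᶜ ∧ w.getLast? = some c')).card
      = 2^(k-1) - 1 := by
  have hS := card_compl_singleton c
  have hc' : c' ∈ ({c} : Finset Letter)ᶜ := by simpa using hcc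
  obtain ⟨m, rfl⟩ : ∃ m, k = m + 1 := ⟨k - 1, by omega⟩
  have hsub : ((allWords (m+1)).filter
      (fun w => w.toFinset ⊆ ({c} : Finset Letter)ᶜ ∧ w.getLast? = some c')).card = 2^m := by
    rw [card_wordsInLast m _ _ hc', hS]
  have hsplit : (allWords (m+1)).filter
      (fun w => w.toFinset ⊆ ({c} : Finset Letter)ᶜ ∧ w.getLast? = some c') =
      (allWords (m+1)).filter
      (fun w => (w.toFinset = ({c} : Finset Letter)ᶜ ∧ w.getLast? = some c')) ∪
        {List.replicate (m+1) c'} := by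
    ext w
    simp only [mem_filter, mem_union, mem_singleton, mem_allWords]
    constructor
    · rintro ⟨hlen, hs, hlast⟩
      by_cases he : w.toFinset = ({c} : Finset Letter)ᶜ
      · exact Or.inl ⟨hlen, he, hlast⟩
      · right
        have hne : w ≠ [] := by rintro rfl; simp at hlast
        have hlt : w.toFinset.card < 2 :=
          hS ▸ Finset.card_lt_card (HasSubset.Subset.ssubset_of_ne hs he)
        have hmem := mem_of_getLast?_eq hlast
        rw [List.eq_replicate_iff]
        refine ⟨hlen, fun b hb => ?_⟩
        have hb' : b ∈ w.toFinset := List.mem_toFinset.mpr hb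
        have hc'' : c' ∈ w.toFinset := List.mem_toFinset.mpr hmem
        by_contra hbc
        have : ({b, c'} : Finset Letter) ⊆ w.toFinset := by
          intro x hx; simp at hx; rcases hx with rfl | rfl <;> assumption
        have : ({b, c'} : Finset Letter).card ≤ w.toFinset.card := Finset.card_le_card this
        rw [Finset.card_insert_of_notMem (by simpa using hbc), Finset.card_singleton] at this
        omega
    · rintro (⟨h1, h2, h3⟩ | rfl)
      · exact ⟨h1, h2.le, h3⟩
      · refine ⟨by simp, ?_, getLast?_replicate (by omega) c'⟩
        rw [List.toFinset_replicate_of_ne_zero (by omega)]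
        exact Finset.singleton_subset_iff.mpr hc'
  have hdisj : Disjoint ((allWords (m+1)).filter
      (fun w => (w.toFinset = ({c} : Finset Letter)ᶜ ∧ w.getLast? = some c')))
      ({List.replicate (m+1) c'} : Finset Word) := by
    rw [Finset.disjoint_left]
    rintro w hw hw2
    rw [mem_singleton] at hw2
    subst hw2
    have := (Finset.mem_filter.mp hw).2.1
    rw [List.toFinset_replicate_of_ne_zero (by omega)] at this
    have : (1 : ℕ) = 2 := by rw [← Finset.card_singleton c', this, hS]
    omega
  have hu := Finset.card_union_of_disjoint hdisj
  rw [← hsplit, hsub, Finset.card_singleton] at hu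
  have : 1 ≤ 2^m := Nat.one_le_two_pow
  simp only [Nat.add_sub_cancel]
  omega

lemma card_f1 (k : ℕ) (hk : 1 ≤ k) (c : Letter) :
    ((allWords k).filter (fun w => w.toFinset.card ≤ 2 ∧ w.getLast? = some c)).card
      = 2^k - 1 := by
  obtain ⟨a, b, hab, hab2⟩ := Finset.card_eq_two.mp (card_compl_singleton c)
  obtain ⟨m, rfl⟩ : ∃ m, k = m + 1 := ⟨k - 1, by omega⟩
  have hac : a ≠ c := by
    have : a ∈ ({c} : Finset Letter)ᶜ := hab2 ▸ by simp
    simpa using this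
  have hbc : b ≠ c := by
    have : b ∈ ({c} : Finset Letter)ᶜ := hab2 ▸ by simp
    simpa using this
  have hca : c ∈ ({a} : Finset Letter)ᶜ := by simpa using hac.symm
  have hcb : c ∈ ({b} : Finset Letter)ᶜ := by simpa using hbc.symm
  set A := (allWords (m+1)).filter
    (fun w => w.toFinset ⊆ ({a} : Finset Letter)ᶜ ∧ w.getLast? = some c) with hA
  set B := (allWords (m+1)).filter
    (fun w => w.toFinset ⊆ ({b} : Finset Letter)ᶜ ∧ w.getLast? = some c) with hB
  have hcardA : A.card = 2^m := by
    rw [hA, card_wordsInLast m _ _ hca, card_compl_singleton]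
  have hcardB : B.card = 2^m := by
    rw [hB, card_wordsInLast m _ _ hcb, card_compl_singleton]
  have hunion : A ∪ B = (allWords (m+1)).filter
      (fun w => w.toFinset.card ≤ 2 ∧ w.getLast? = some c) := by
    ext w
    simp only [hA, hB, mem_union, mem_filter, mem_allWords]
    constructor
    · rintro (⟨h1, h2, h3⟩ | ⟨h1, h2, h3⟩) <;>
        exact ⟨h1, le_trans (Finset.card_le_card h2) (le_of_eq (card_compl_singleton _)), h3⟩
    · rintro ⟨h1, h2, h3⟩
      have hne : w.toFinset ≠ Finset.univ := by
        intro h; rw [h] at h2; simp [Finset.card_univ] at h2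
      have hcompl : (w.toFinsetᶜ : Finset Letter).Nonempty := by
        rw [Finset.nonempty_iff_ne_empty]
        intro h
        exact hne (by simpa using congrArg compl h)
      obtain ⟨x, hx⟩ := hcompl
      rw [Finset.mem_compl] at hx
      have hxc : x ≠ c := fun h => hx (h ▸ List.mem_toFinset.mpr (mem_of_getLast?_eq h3))
      have hxab : x = a ∨ x = b := by
        have : x ∈ ({c} : Finset Letter)ᶜ := by simpa using hxc
        rw [hab2] at this; simpa using this
      have hsub : ∀ y : Letter, x = y → w.toFinset ⊆ ({y} : Finset Letter)ᶜ := by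
        rintro y rfl
        intro z hz
        simp only [Finset.mem_compl, Finset.mem_singleton]
        rintro rfl; exact hx hz
      rcases hxab with rfl | rfl
      · exact Or.inl ⟨h1, hsub _ rfl, h3⟩
      · exact Or.inr ⟨h1, hsub _ rfl, h3⟩
  have hinter : A ∩ B = {List.replicate (m+1) c} := by
    ext w
    simp only [hA, hB, mem_inter, mem_filter, mem_allWords, mem_singleton]
    constructor
    · rintro ⟨⟨h1, h2, h3⟩, ⟨-, h4, -⟩⟩
      rw [List.eq_replicate_iff]
      refine ⟨h1, fun y hy => ?_⟩
      have hy2 := h2 (List.mem_toFinset.mpr hy)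
      have hy4 := h4 (List.mem_toFinset.mpr hy)
      rw [Finset.mem_compl, Finset.mem_singleton] at hy2 hy4
      have : y ∈ ({c} : Finset Letter)ᶜ → y = a ∨ y = b := by
        rw [hab2]; simp
      by_contra hyc
      rcases this (by simpa using hyc) with rfl | rfl
      · exact hy2 rfl
      · exact hy4 rfl
    · rintro rfl
      have ht : (List.replicate (m+1) c).toFinset = {c} :=
        List.toFinset_replicate_of_ne_zero (by omega)
      have hl := getLast?_replicate (show 1 ≤ m+1 by omega) c
      refine ⟨⟨by simp, ?_, hl⟩, by simp, ?_, hl⟩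
      · rw [ht]; exact Finset.singleton_subset_iff.mpr hca
      · rw [ht]; exact Finset.singleton_subset_iff.mpr hcb
  have := Finset.card_union_add_card_inter A B
  rw [hunion, hinter, hcardA, hcardB, Finset.card_singleton] at this
  have h2m : 1 ≤ 2^m := Nat.one_le_two_pow
  have : ((allWords (m+1)).filter
      (fun w => w.toFinset.card ≤ 2 ∧ w.getLast? = some c)).card = 2^m + 2^m - 1 := by omega
  rw [this, pow_succ]
  omega

lemma card_ffree (k : ℕ) (hk : 1 ≤ k) :
    ((allWords k).filter (fun w => w.toFinset.card ≤ 2)).card = 3 * 2^k - 3 := by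
  have hsplit : (allWords k).filter (fun w => w.toFinset.card ≤ 2) =
      (Finset.univ : Finset Letter).biUnion
        (fun c => (allWords k).filter (fun w => w.toFinset.card ≤ 2 ∧ w.getLast? = some c)) := by
    ext w
    simp only [mem_biUnion, mem_filter, mem_allWords, Finset.mem_univ, true_and]
    constructor
    · rintro ⟨h1, h2⟩
      have hne : w ≠ [] := by rintro rfl; simp at h1; omega
      exact ⟨w.getLast hne, h1, h2, List.getLast?_eq_getLast_of_ne_nil hne⟩
    · rintro ⟨c, h1, h2, -⟩; exact ⟨h1, h2⟩
  have hdisj : ∀ c ∈ (Finset.univ : Finset Letter), ∀ c' ∈ (Finset.univ : Finset Letter), c ≠ c' →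
      Disjoint ((allWords k).filter (fun w => w.toFinset.card ≤ 2 ∧ w.getLast? = some c))
        ((allWords k).filter (fun w => w.toFinset.card ≤ 2 ∧ w.getLast? = some c')) := by
    intro c _ c' _ hne
    rw [Finset.disjoint_left]
    rintro w hw hw'
    have h1 := (Finset.mem_filter.mp hw).2.2
    have h2 := (Finset.mem_filter.mp hw').2.2
    rw [h1] at h2
    exact hne (by simpa using h2)
  rw [hsplit, Finset.card_biUnion hdisj]
  have : ∀ c ∈ (Finset.univ : Finset Letter),
      ((allWords k).filter (fun w => w.toFinset.card ≤ 2 ∧ w.getLast? = some c)).card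
        = 2^k - 1 := fun c _ => card_f1 k hk c
  rw [Finset.sum_congr rfl this]
  simp only [Finset.sum_const, Finset.card_univ]
  have h2m : 1 ≤ 2^k := Nat.one_le_two_pow
  have : Fintype.card Letter = 3 := by simp
  rw [this, smul_eq_mul, Nat.mul_sub]

def allLists : List ℕ → Finset (List Word)
  | [] => {[]}
  | k :: ks => ((allWords k) ×ˢ allLists ks).image (fun p => p.1 :: p.2)

lemma mem_allLists {ks : List ℕ} {τs : List Word} :
    τs ∈ allLists ks ↔ τs.map List.length = ks := by
  induction ks generalizing τs with
  | nil => cases τs <;> simp [allLists]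
  | cons k ks ih =>
    cases τs with
    | nil => simp [allLists]
    | cons w τs =>
      simp only [allLists, mem_image, mem_product, Prod.exists, List.map_cons, List.cons.injEq]
      constructor
      · rintro ⟨a, b, ⟨h1, h2⟩, he⟩
        obtain ⟨rfl, rfl⟩ : a = w ∧ b = τs := by simpa using he
        exact ⟨mem_allWords.mp h1, ih.mp h2⟩
      · rintro ⟨h1, h2⟩
        exact ⟨w, τs, ⟨mem_allWords.mpr h1, ih.mpr h2⟩, ⟨rfl, rfl⟩⟩

def chR (a b : Word) : Prop := ∃ c : Letter, a.getLast? = some c ∧ c ∉ b.toFinset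

instance : DecidableRel chR := fun a b => by unfold chR; infer_instance

def Gpred (c : Letter) (τs : List Word) : Prop :=
  (∀ w ∈ τs, 2 ≤ w.length ∧ w.toFinset.card = 2) ∧ List.IsChain chR τs ∧ c ∉ τs.headI.toFinset

instance (c : Letter) : DecidablePred (Gpred c) := fun τs => by unfold Gpred; infer_instance

def Gset (c : Letter) (L : List ℕ) : Finset (List Word) := (allLists L).filter (Gpred c)

lemma toFinset_eq_compl_iff {w : Word} {c : Letter} :
    w.toFinset = ({c} : Finset Letter)ᶜ ↔ w.toFinset.card = 2 ∧ c ∉ w.toFinset := by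
  constructor
  · rintro h
    rw [h]
    exact ⟨card_compl_singleton c, by simp⟩
  · rintro ⟨h1, h2⟩
    apply Finset.eq_of_subset_of_card_le
    · intro x hx
      simp only [Finset.mem_compl, Finset.mem_singleton]
      rintro rfl; exact h2 hx
    · rw [card_compl_singleton, h1]

lemma Gset_singleton (c : Letter) (kl : ℕ) (hkl : 2 ≤ kl) :
    Gset c [kl] = ((allWords kl).filter
      (fun w => w.toFinset = ({c} : Finset Letter)ᶜ)).image (fun w => [w]) := by
  ext τs
  cases τs with
  | nil => simp [Gset, mem_allLists]
  | cons w rest =>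
    cases rest with
    | cons w2 rest2 => simp [Gset, mem_allLists]
    | nil =>
      simp only [Gset, mem_filter, mem_allLists, List.map_cons, List.map_nil, List.cons.injEq,
        and_true, Gpred, List.mem_singleton, forall_eq, List.isChain_singleton, true_and,
        List.headI, mem_image]
      constructor
      · rintro ⟨h1, ⟨h2, h3⟩, h4⟩
        exact ⟨w, ⟨mem_allWords.mpr h1, toFinset_eq_compl_iff.mpr ⟨h3, h4⟩⟩, rfl⟩
      · rintro ⟨w', hw', he⟩
        obtain rfl : w' = w := by simpa using he
        obtain ⟨hmem, heq⟩ := hw'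
        obtain ⟨h3, h4⟩ := toFinset_eq_compl_iff.mp heq
        have hlen := mem_allWords.mp hmem
        exact ⟨hlen, ⟨by omega, h3⟩, h4⟩

lemma card_Gset_singleton (c : Letter) (kl : ℕ) (hkl : 2 ≤ kl) :
    (Gset c [kl]).card = 2^kl - 2 := by
  rw [Gset_singleton c kl hkl,
    Finset.card_image_of_injective _ (fun a b h => by simpa using h),
    card_flast kl (by omega) c]

lemma mem_Gset {c : Letter} {L : List ℕ} {τs : List Word} :
    τs ∈ Gset c L ↔ τs.map List.length = L ∧ Gpred c τs := by
  simp [Gset, mem_allLists]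

lemma Gset_cons (c : Letter) (m : ℕ) (hm : 2 ≤ m) (L : List ℕ) (hL : L ≠ []) :
    Gset c (m :: L) = Finset.univ.biUnion (fun c' =>
      (((allWords m).filter
        (fun w => w.toFinset = ({c} : Finset Letter)ᶜ ∧ w.getLast? = some c')) ×ˢ Gset c' L).image
        (fun p => p.1 :: p.2)) := by
  ext τs
  cases τs with
  | nil => simp [Gset, mem_allLists]
  | cons w rest =>
    have hrest' : ∀ (h : rest.map List.length = L), rest ≠ [] := by
      rintro h rfl; exact hL h.symm
    simp only [Gset, mem_filter, mem_allLists, List.map_cons, List.cons.injEq, mem_biUnion,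
      Finset.mem_univ, true_and, mem_image, mem_product, Prod.exists]
    constructor
    · rintro ⟨⟨hwm, hrest⟩, ⟨hblocks, hchain, hhead⟩⟩
      have hne : rest ≠ [] := hrest' hrest
      obtain ⟨r, rest2, rfl⟩ := List.exists_cons_of_ne_nil hne
      rw [List.isChain_cons] at hchain
      obtain ⟨hcR, hchain2⟩ := hchain
      obtain ⟨c', hc'1, hc'2⟩ := hcR r rfl
      refine ⟨c', w, r :: rest2, ⟨?_, ?_⟩, rfl, rfl⟩
      · exact ⟨mem_allWords.mpr hwm,
          toFinset_eq_compl_iff.mpr ⟨(hblocks w (by simp)).2, by simpa using hhead⟩, hc'1⟩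
      · exact ⟨hrest, fun w' hw' => hblocks w' (by simp [hw']), hchain2, by simpa using hc'2⟩
    · rintro ⟨c', w', rest', ⟨hw', hrest'2⟩, he1, he2⟩
      subst he1; subst he2
      obtain ⟨hwmem, hweq, hwlast⟩ := hw'
      obtain ⟨hrlen, hrblocks, hrchain, hrhead⟩ := hrest'2
      obtain ⟨hwc2, hwc⟩ := toFinset_eq_compl_iff.mp hweq
      have hne := hrest' hrlen
      refine ⟨⟨mem_allWords.mp hwmem, hrlen⟩, ?_, ?_, by simpa using hwc⟩
      · intro x hx
        rcases List.mem_cons.mp hx with rfl | hx2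
        · exact ⟨(mem_allWords.mp hwmem) ▸ hm, hwc2⟩
        · exact hrblocks x hx2
      · rw [List.isChain_cons]
        refine ⟨?_, hrchain⟩
        intro b hb
        refine ⟨c', hwlast, ?_⟩
        obtain ⟨r, rest2, rfl⟩ := List.exists_cons_of_ne_nil hne
        obtain rfl : b = r := by simpa [eq_comm] using hb
        simpa using hrhead

lemma consPair_inj : Function.Injective (fun p : Word × List Word => p.1 :: p.2) := by
  intro p q h
  simpa [Prod.ext_iff] using h

lemma filter_fmid_self (m : ℕ) (c : Letter) :
    (allWords m).filter
      (fun w => w.toFinset = ({c} : Finset Letter)ᶜ ∧ w.getLast? = some c) = ∅ := by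
  rw [Finset.filter_eq_empty_iff]
  rintro w hw ⟨h1, h2⟩
  have hc : c ∈ w.toFinset := List.mem_toFinset.mpr (mem_of_getLast?_eq h2)
  rw [h1] at hc
  simp at hc

lemma card_Gset (ms : List ℕ) (kl : ℕ) (hm : ∀ m ∈ ms, 2 ≤ m) (hkl : 2 ≤ kl) (c : Letter) :
    (Gset c (ms ++ [kl])).card
      = (ms.map (fun m => 2 * (2^(m-1) - 1))).prod * (2^kl - 2) := by
  induction ms generalizing c with
  | nil => simpa using card_Gset_singleton c kl hkl
  | cons m ms ih =>
    have hm0 : 2 ≤ m := hm m (by simp)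
    rw [List.cons_append, Gset_cons c m hm0 _ (by simp)]
    rw [Finset.card_biUnion]
    · have hterm : ∀ c' : Letter, c' ≠ c →
          ((((allWords m).filter
            (fun w => w.toFinset = ({c} : Finset Letter)ᶜ ∧ w.getLast? = some c')) ×ˢ
              Gset c' (ms ++ [kl])).image (fun p => p.1 :: p.2)).card
            = (2^(m-1) - 1) * ((ms.map (fun m => 2 * (2^(m-1) - 1))).prod * (2^kl - 2)) := by
        intro c' hcc
        rw [Finset.card_image_of_injective _ consPair_inj, Finset.card_product,
          card_fmid m (by omega) c c' hcc, ih (fun x hx => hm x (by simp [hx])) c']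
      have hsplit := Finset.sum_compl_add_sum ({c} : Finset Letter)
        (fun c' => ((((allWords m).filter
            (fun w => w.toFinset = ({c} : Finset Letter)ᶜ ∧ w.getLast? = some c')) ×ˢ
              Gset c' (ms ++ [kl])).image (fun p => p.1 :: p.2)).card)
      rw [← hsplit, Finset.sum_singleton, filter_fmid_self, Finset.empty_product,
        Finset.image_empty, Finset.card_empty, add_zero,
        Finset.sum_congr rfl (fun c' hc' => hterm c' (by simpa using hc')),
        Finset.sum_const, card_compl_singleton, List.map_cons, List.prod_cons]
      ring
    · intro c₁ _ c₂ _ hne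
      rw [Function.onFun, Finset.disjoint_left]
      rintro τs h1 h2
      simp only [mem_image, mem_product, Prod.exists] at h1 h2
      obtain ⟨w1, r1, ⟨hw1, -⟩, he1⟩ := h1
      obtain ⟨w2, r2, ⟨hw2, -⟩, he2⟩ := h2
      rw [← he2] at he1
      obtain ⟨rfl, rfl⟩ : w1 = w2 ∧ r1 = r2 := by simpa using he1
      have g1 := (Finset.mem_filter.mp hw1).2.2
      have g2 := (Finset.mem_filter.mp hw2).2.2
      rw [g1] at g2
      exact hne (by simpa using g2)

def NDpred (τs : List Word) : Prop :=
  τs ≠ [] ∧ 1 ≤ τs.headI.length ∧ τs.headI.toFinset.card ≤ 2 ∧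
  (∀ w ∈ τs.tail, 2 ≤ w.length ∧ w.toFinset.card = 2) ∧ List.IsChain chR τs

instance : DecidablePred NDpred := fun τs => by unfold NDpred; infer_instance

lemma ND_cons (k₁ : ℕ) (hk₁ : 1 ≤ k₁) (L : List ℕ) (hL : L ≠ []) :
    (allLists (k₁ :: L)).filter NDpred = Finset.univ.biUnion (fun c =>
      (((allWords k₁).filter
        (fun w => w.toFinset.card ≤ 2 ∧ w.getLast? = some c)) ×ˢ Gset c L).image
        (fun p => p.1 :: p.2)) := by
  ext τs
  cases τs with
  | nil => simp [mem_allLists, NDpred]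
  | cons w rest =>
    have hrest' : ∀ (h : rest.map List.length = L), rest ≠ [] := by
      rintro h rfl; exact hL h.symm
    simp only [mem_filter, mem_allLists, List.map_cons, List.cons.injEq, mem_biUnion,
      Finset.mem_univ, true_and, mem_image, mem_product, Prod.exists, NDpred,
      List.headI, List.tail]
    constructor
    · rintro ⟨⟨hwlen, hrest⟩, -, hh1, hh2, hblocks, hchain⟩
      have hne : rest ≠ [] := hrest' hrest
      obtain ⟨r, rest2, rfl⟩ := List.exists_cons_of_ne_nil hne
      rw [List.isChain_cons] at hchain
      obtain ⟨hcR, hchain2⟩ := hchain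
      obtain ⟨c, hc1, hc2⟩ := hcR r rfl
      refine ⟨c, w, r :: rest2, ⟨⟨mem_allWords.mpr hwlen, hh2, hc1⟩, ?_⟩, rfl, rfl⟩
      exact mem_Gset.mpr ⟨hrest, hblocks, hchain2, by simpa using hc2⟩
    · rintro ⟨c, w', rest', ⟨hw', hrest'2⟩, he1, he2⟩
      subst he1; subst he2
      obtain ⟨hwmem, hwcard, hwlast⟩ := hw'
      obtain ⟨hrlen, hrblocks, hrchain, hrhead⟩ := mem_Gset.mp hrest'2
      have hne := hrest' hrlen
      refine ⟨⟨mem_allWords.mp hwmem, hrlen⟩, by simp,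
        (mem_allWords.mp hwmem) ▸ hk₁, hwcard, hrblocks, ?_⟩
      rw [List.isChain_cons]
      refine ⟨?_, hrchain⟩
      intro b hb
      refine ⟨c, hwlast, ?_⟩
      obtain ⟨r, rest2, rfl⟩ := List.exists_cons_of_ne_nil hne
      obtain rfl : b = r := by simpa [eq_comm] using hb
      simpa using hrhead

lemma card_ND_cons (k₁ : ℕ) (ms : List ℕ) (kl : ℕ) (hk₁ : 1 ≤ k₁)
    (hm : ∀ m ∈ ms, 2 ≤ m) (hkl : 2 ≤ kl) :
    ((allLists (k₁ :: (ms ++ [kl]))).filter NDpred).card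
      = 3 * ((2^k₁ - 1) * ((ms.map (fun m => 2 * (2^(m-1) - 1))).prod * (2^kl - 2))) := by
  rw [ND_cons k₁ hk₁ _ (by simp)]
  rw [Finset.card_biUnion]
  · have hterm : ∀ c ∈ (Finset.univ : Finset Letter),
        ((((allWords k₁).filter
          (fun w => w.toFinset.card ≤ 2 ∧ w.getLast? = some c)) ×ˢ Gset c (ms ++ [kl])).image
          (fun p => p.1 :: p.2)).card
          = (2^k₁ - 1) * ((ms.map (fun m => 2 * (2^(m-1) - 1))).prod * (2^kl - 2)) := by
      intro c _
      rw [Finset.card_image_of_injective _ consPair_inj, Finset.card_product,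
        card_f1 k₁ hk₁ c, card_Gset ms kl hm hkl c]
    rw [Finset.sum_congr rfl hterm, Finset.sum_const, Finset.card_univ]
    simp [mul_assoc]
  · intro c₁ _ c₂ _ hne
    rw [Function.onFun, Finset.disjoint_left]
    rintro τs h1 h2
    simp only [mem_image, mem_product, Prod.exists] at h1 h2
    obtain ⟨w1, r1, ⟨hw1, -⟩, he1⟩ := h1
    obtain ⟨w2, r2, ⟨hw2, -⟩, he2⟩ := h2
    rw [← he2] at he1
    obtain ⟨rfl, rfl⟩ : w1 = w2 ∧ r1 = r2 := by simpa using he1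
    have g1 := (Finset.mem_filter.mp hw1).2.2
    have g2 := (Finset.mem_filter.mp hw2).2.2
    rw [g1] at g2
    exact hne (by simpa using g2)

lemma card_ND_single (k₁ : ℕ) (hk₁ : 1 ≤ k₁) :
    ((allLists [k₁]).filter NDpred).card = 3 * 2^k₁ - 3 := by
  have hsplit : (allLists [k₁]).filter NDpred
      = ((allWords k₁).filter (fun w => w.toFinset.card ≤ 2)).image (fun w => [w]) := by
    ext τs
    cases τs with
    | nil => simp [mem_allLists, NDpred]
    | cons w rest =>
      cases rest with
      | cons w2 rest2 => simp [mem_allLists, NDpred]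
      | nil =>
        simp only [mem_filter, mem_allLists, List.map_cons, List.map_nil, List.cons.injEq,
          and_true, NDpred, List.headI, List.tail, mem_image]
        constructor
        · rintro ⟨h1, -, -, h2, -⟩
          exact ⟨w, ⟨mem_allWords.mpr h1, h2⟩, rfl⟩
        · rintro ⟨w', ⟨hmem, hcard⟩, he⟩
          obtain rfl : w' = w := by simpa using he
          have hlen := mem_allWords.mp hmem
          refine ⟨hlen, by simp, hlen ▸ hk₁, hcard, by simp, by simp⟩
  rw [hsplit, Finset.card_image_of_injective _ (fun a b h => by simpa using h),
    card_ffree k₁ hk₁]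

lemma myCompl_unique {s : Finset Letter} (hs : s.card = 2) {c c' : Letter}
    (hc : c ∉ s) (hc' : c' ∉ s) : c' = c := by
  by_contra h
  have hsub : s ⊆ ({c, c'} : Finset Letter)ᶜ := by
    intro x hx
    simp only [Finset.mem_compl, Finset.mem_insert, Finset.mem_singleton]
    push_neg
    exact ⟨fun hxc => hc (hxc ▸ hx), fun hxc => hc' (hxc ▸ hx)⟩
  have hcard := Finset.card_le_card hsub
  rw [Finset.card_compl, Finset.card_insert_of_notMem (by simpa using Ne.symm h),
    Finset.card_singleton, hs] at hcard
  have h3 : Fintype.card Letter = 3 := by simp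
  rw [h3] at hcard
  omega

lemma flatten_inj_of_lengths : ∀ {a b : List Word},
    a.map List.length = b.map List.length → a.flatten = b.flatten → a = b := by
  intro a
  induction a with
  | nil =>
    intro b h _
    cases b with
    | nil => rfl
    | cons y b => simp at h
  | cons x a ih =>
    intro b h h2
    cases b with
    | nil => simp at h
    | cons y b =>
      simp only [List.map_cons, List.cons.injEq] at h
      obtain ⟨h1, hrest⟩ := h
      rw [List.flatten_cons, List.flatten_cons] at h2
      obtain ⟨e1, e2⟩ := List.append_inj h2 h1
      rw [e1, ih hrest e2]

lemma get_mem_tail {τs : List Word} (i : Fin τs.length) (hi : 1 ≤ i.1) :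
    τs.get i ∈ τs.tail := by
  cases τs with
  | nil => exact absurd i.2 (by simp)
  | cons t rest =>
    rcases i with ⟨i, hlt⟩
    have hi' : 1 ≤ i := hi
    obtain ⟨j, rfl⟩ : ∃ j, i = j + 1 := ⟨i - 1, by omega⟩
    have h1 : (t :: rest).get ⟨j + 1, hlt⟩ = rest.get ⟨j, by simpa using hlt⟩ := rfl
    rw [h1, List.tail_cons]
    exact List.get_mem rest _

lemma isND_iff {σ : Word} {τs : List Word} :
    IsNormalDecomp σ τs ↔ σ = τs.flatten ∧ NDpred τs := by
  rcases eq_or_ne τs [] with rfl | hne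
  · simp [IsNormalDecomp, NDpred]
  have h0 : 0 < τs.length := List.length_pos_iff.mpr hne
  have hget0 : τs.get ⟨0, h0⟩ = τs.headI := by
    obtain ⟨t, rest, rfl⟩ := List.exists_cons_of_ne_nil hne; rfl
  constructor
  · rintro ⟨hσ, -, hblocks, hchain⟩
    refine ⟨hσ, hne, ?_, ?_, ?_, ?_⟩
    · have := ((hblocks ⟨0, h0⟩).1 rfl).1
      rwa [hget0] at this
    · have := ((hblocks ⟨0, h0⟩).1 rfl).2
      rwa [hget0] at this
    · intro w hw
      obtain ⟨t, rest, rfl⟩ := List.exists_cons_of_ne_nil hne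
      obtain ⟨⟨j, hj⟩, rfl⟩ := List.mem_iff_get.mp hw
      have hlt : j + 1 < (t :: rest).length := by simpa using hj
      have hg : (t :: rest).get ⟨j + 1, hlt⟩ = (t :: rest).tail.get ⟨j, hj⟩ := rfl
      rw [← hg]
      exact (hblocks ⟨j + 1, hlt⟩).2 (by exact Nat.le_add_left 1 j)
    · rw [List.isChain_iff_getElem]
      intro i hi
      obtain ⟨c, h1, h2, -⟩ := hchain i (by omega)
      exact ⟨c, h1, fun hmem => h2 hmem⟩
  · rintro ⟨hσ, -, hh1, hh2, htail, hchain⟩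
    refine ⟨hσ, hne, ?_, ?_⟩
    · intro i
      constructor
      · intro hi0
        have hi : i = ⟨0, h0⟩ := Fin.ext hi0
        rw [hi, hget0]
        exact ⟨hh1, hh2⟩
      · intro hi1
        exact htail _ (get_mem_tail i hi1)
    · intro i h
      obtain ⟨c, h1, h2⟩ := List.isChain_iff_getElem.mp hchain i (by omega)
      refine ⟨c, h1, h2, ?_⟩
      intro c' hc'
      exact myCompl_unique (htail _ (get_mem_tail ⟨i + 1, h⟩ (by exact Nat.le_add_left 1 i))).2 h2 hc'

lemma Wcount_eq (ks : List ℕ) : Wcount ks = ((allLists ks).filter NDpred).card := by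
  rw [Wcount]
  have hbij : Function.Bijective
      (fun τs : {τs : List Word // τs ∈ (allLists ks).filter NDpred} =>
        (⟨τs.1.flatten, τs.1, isND_iff.mpr ⟨rfl, (Finset.mem_filter.mp τs.2).2⟩,
          mem_allLists.mp (Finset.mem_filter.mp τs.2).1⟩ :
          {σ : Word // ∃ τs : List Word, IsNormalDecomp σ τs ∧ τs.map List.length = ks})) := by
    constructor
    · rintro ⟨a, ha⟩ ⟨b, hb⟩ hab
      have h2 : a.flatten = b.flatten := by simpa using hab
      have hla := mem_allLists.mp (Finset.mem_filter.mp ha).1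
      have hlb := mem_allLists.mp (Finset.mem_filter.mp hb).1
      exact Subtype.ext (flatten_inj_of_lengths (hla.trans hlb.symm) h2)
    · rintro ⟨σ, τs, hnd, hlen⟩
      obtain ⟨hσ, hnd'⟩ := isND_iff.mp hnd
      exact ⟨⟨τs, Finset.mem_filter.mpr ⟨mem_allLists.mpr hlen, hnd'⟩⟩,
        Subtype.ext hσ.symm⟩
  rw [← Nat.card_congr (Equiv.ofBijective _ hbij), Nat.card_eq_finsetCard]

/-- Counting words with a normal decomposition of given block lengths: for `l ≥ 3`
(middle blocks `ms` nonempty), `W_{k₁⋯k_l} = (2^{k₁}−1)·∏_{i=2}^{l−1} 2(2^{k_i−1}−1)·3(2^{k_l}−2)`;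
for `l = 2`, `W_{k₁k₂} = (2^{k₁}−1)·3(2^{k₂}−2)`; for `l = 1`, `W_{k₁} = 3·2^{k₁}−3`. -/
theorem Wcount_formula :
    (∀ (k₁ : ℕ) (ms : List ℕ) (kl : ℕ), 1 ≤ k₁ → (∀ m ∈ ms, 2 ≤ m) → 2 ≤ kl → ms ≠ [] →
      Wcount (k₁ :: (ms ++ [kl])) =
        (2 ^ k₁ - 1) * (ms.map fun m => 2 * (2 ^ (m - 1) - 1)).prod * (3 * (2 ^ kl - 2))) ∧
    (∀ k₁ kl : ℕ, 1 ≤ k₁ → 2 ≤ kl →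
      Wcount [k₁, kl] = (2 ^ k₁ - 1) * (3 * (2 ^ kl - 2))) ∧
    (∀ k₁ : ℕ, 1 ≤ k₁ → Wcount [k₁] = 3 * 2 ^ k₁ - 3) := by
  refine ⟨?_, ?_, ?_⟩
  · intro k₁ ms kl h1 h2 h3 _
    rw [Wcount_eq, card_ND_cons k₁ ms kl h1 h2 h3]
    ring
  · intro k₁ kl h1 h2
    have h := card_ND_cons k₁ [] kl h1 (by simp) h2
    simp only [List.nil_append, List.map_nil, List.prod_nil, one_mul] at h
    rw [Wcount_eq, h]
    ring
  · intro k₁ h1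
    rw [Wcount_eq, card_ND_single k₁ h1]
end
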